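/- arXiv:1703.03743 — 3 statements merged into one kernel-verified Lean document; each statement's English description precedes it below -/
import Mathlib

section
/- For any finite Q ⊂ ℤ^d and any m ≥ 1, every f ∈ 𝒯(Q) with ‖f‖₁ ≤ 1 admits an m-term approximant from the dictionary 𝒟¹(Q) in the L₂ norm of error at most (|Q|/m)^{1/2}; that is, σ_m(𝒯(Q)₁, 𝒟¹(Q))₂ ≤ (|Q|/m)^{1/2}. -/
open MeasureTheory Real Finset

noncomputable section

/-- The fundamental cell `[0,2π)^d` of the torus `𝕋^d`. -/
def torusBox (d : ℕ) : Set (Fin d → ℝ) := Set.univ.pi fun _ => Set.Ico 0 (2 * π)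

/-- The exponential `e^{i(k,x)}` on `𝕋^d`. -/
def trigMono (d : ℕ) (k : Fin d → ℤ) (x : Fin d → ℝ) : ℂ :=
  Complex.exp (Complex.I * ∑ j, (k j : ℂ) * (x j : ℂ))

/-- The `L₁` norm on `𝕋^d` with respect to the normalized Lebesgue measure `(2π)^{-d} dx`. -/
def torusL1 (d : ℕ) (f : (Fin d → ℝ) → ℂ) : ℝ :=
  ((2 * π) ^ d)⁻¹ * ∫ x in torusBox d, ‖f x‖

/-- The `L₂` norm on `𝕋^d` with respect to the normalized Lebesgue measure `(2π)^{-d} dx`. -/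
def torusL2 (d : ℕ) (f : (Fin d → ℝ) → ℂ) : ℝ :=
  Real.sqrt (((2 * π) ^ d)⁻¹ * ∫ x in torusBox d, ‖f x‖ ^ 2)

/-- The normalized Dirichlet kernel `w_Q = |Q|^{-1/2} 𝒟_Q`, `𝒟_Q(x) = Σ_{k∈Q} e^{i(k,x)}`. -/
def wQ (d : ℕ) (Q : Finset (Fin d → ℤ)) (x : Fin d → ℝ) : ℂ :=
  ((Real.sqrt (Q.card : ℝ) : ℝ) : ℂ)⁻¹ * ∑ k ∈ Q, trigMono d k x

namespace SP
variable {d : ℕ}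

lemma trigMono_eq (k : Fin d → ℤ) (x : Fin d → ℝ) :
    trigMono d k x = Complex.exp (((∑ j, (k j : ℝ) * x j : ℝ) : ℂ) * Complex.I) := by
  unfold trigMono
  rw [mul_comm]
  congr 1
  push_cast
  ring

lemma norm_trigMono (k : Fin d → ℤ) (x : Fin d → ℝ) : ‖trigMono d k x‖ = 1 := by
  rw [trigMono_eq, Complex.norm_exp_ofReal_mul_I]

lemma conj_trigMono (k : Fin d → ℤ) (x : Fin d → ℝ) :
    (starRingEnd ℂ) (trigMono d k x) = trigMono d (-k) x := by
  rw [trigMono_eq, trigMono_eq, ← Complex.exp_conj]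
  congr 1
  rw [map_mul, Complex.conj_I, Complex.conj_ofReal]
  push_cast
  simp only [Pi.neg_apply, Int.cast_neg, neg_mul, Finset.sum_neg_distrib]
  ring

lemma trigMono_add (k l : Fin d → ℤ) (x : Fin d → ℝ) :
    trigMono d (k + l) x = trigMono d k x * trigMono d l x := by
  rw [trigMono_eq, trigMono_eq, trigMono_eq, ← Complex.exp_add, ← add_mul]
  congr 2
  push_cast
  rw [← Finset.sum_add_distrib]
  apply Finset.sum_congr rfl
  intro j _
  simp [Pi.add_apply]
  ring

lemma trigMono_sub_arg (k : Fin d → ℤ) (x y : Fin d → ℝ) :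
    trigMono d k (x - y) = trigMono d k x * (starRingEnd ℂ) (trigMono d k y) := by
  rw [conj_trigMono, trigMono_eq, trigMono_eq, trigMono_eq, ← Complex.exp_add, ← add_mul]
  congr 2
  push_cast
  rw [← Finset.sum_add_distrib]
  apply Finset.sum_congr rfl
  intro j _
  simp [Pi.sub_apply, Pi.neg_apply]
  ring

lemma continuous_trigMono (k : Fin d → ℤ) : Continuous (trigMono d k) := by
  unfold trigMono
  exact Complex.continuous_exp.comp (continuous_const.mul
    (continuous_finset_sum _ fun j _ => continuous_const.mul
      (Complex.continuous_ofReal.comp (continuous_apply j))))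

end SP
namespace SP

lemma oneDim (n : ℤ) :
    ∫ x in Set.Ico (0:ℝ) (2*π), Complex.exp ((((n:ℝ) * x : ℝ)) * Complex.I) =
      if n = 0 then (((2*π : ℝ)) : ℂ) else 0 := by
  have h2 : (0:ℝ) ≤ 2*π := by positivity
  have hint : ∀ x:ℝ, ((((n:ℝ) * x : ℝ)) : ℂ) * Complex.I = ((n:ℂ)*Complex.I) * (x:ℂ) := by
    intro x; push_cast; ring
  simp only [hint]
  rw [MeasureTheory.restrict_Ico_eq_restrict_Ioc, ← intervalIntegral.integral_of_le h2]
  by_cases hn : n = 0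
  · simp only [hn, Int.cast_zero, zero_mul, Complex.exp_zero, if_true]
    simp
  · rw [integral_exp_mul_complex (by simp [hn, Complex.I_ne_zero, Complex.ext_iff] : ((n:ℂ)*Complex.I) ≠ 0)]
    have : ((n:ℂ)*Complex.I) * ((2*π : ℝ):ℂ) = (n:ℂ) * (2*(π:ℂ)*Complex.I) := by push_cast; ring
    rw [this, Complex.exp_int_mul_two_pi_mul_I]
    simp [hn]

end SP
namespace SP
variable {d : ℕ}

lemma measurableSet_torusBox : MeasurableSet (torusBox d) :=
  MeasurableSet.univ_pi fun _ => measurableSet_Ico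

lemma integral_trigMono_box (k : Fin d → ℤ) :
    ∫ x in torusBox d, trigMono d k x = if k = 0 then (((2*π)^d : ℝ) : ℂ) else 0 := by
  have hprod : ∀ x : Fin d → ℝ,
      trigMono d k x = ∏ j, Complex.exp ((((k j : ℝ) * x j : ℝ)) * Complex.I) := by
    intro x
    rw [trigMono_eq, ← Complex.exp_sum]
    congr 1
    push_cast [Finset.sum_mul]
    rfl
  rw [← MeasureTheory.integral_indicator measurableSet_torusBox]
  have heq : (torusBox d).indicator (trigMono d k) = fun x => ∏ j,
      (Set.Ico (0:ℝ) (2*π)).indicator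
        (fun t => Complex.exp ((((k j : ℝ) * t : ℝ)) * Complex.I)) (x j) := by
    funext x
    by_cases hx : x ∈ torusBox d
    · rw [Set.indicator_of_mem hx, hprod]
      exact Finset.prod_congr rfl fun j _ => by
        rw [Set.indicator_of_mem
          (show x j ∈ Set.Ico (0:ℝ) (2*π) from hx j (Set.mem_univ j))]
    · rw [Set.indicator_of_notMem hx]
      obtain ⟨j, -, hj⟩ : ∃ j ∈ Set.univ, x j ∉ Set.Ico (0:ℝ) (2*π) := by
        simpa [torusBox, Set.mem_pi] using hx
      exact (Finset.prod_eq_zero (Finset.mem_univ j) (Set.indicator_of_notMem hj _)).symm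
  rw [heq, MeasureTheory.integral_fintype_prod_volume_eq_prod
    (fun j => (Set.Ico (0:ℝ) (2*π)).indicator
      (fun t => Complex.exp ((((k j : ℝ) * t : ℝ)) * Complex.I)))]
  have hone : ∀ j : Fin d, (∫ t : ℝ, (Set.Ico (0:ℝ) (2*π)).indicator
      (fun t => Complex.exp ((((k j : ℝ) * t : ℝ)) * Complex.I)) t)
        = if k j = 0 then ((2*π:ℝ):ℂ) else 0 := by
    intro j
    rw [MeasureTheory.integral_indicator measurableSet_Ico]
    exact oneDim (k j)
  rw [Finset.prod_congr rfl fun j _ => hone j]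
  by_cases hk : k = 0
  · subst hk
    simp only [Pi.zero_apply, if_true, Finset.prod_const, Finset.card_univ, Fintype.card_fin]
    push_cast
    simp
  · obtain ⟨j, hj⟩ : ∃ j, k j ≠ 0 := by
      by_contra h; push_neg at h; exact hk (funext h)
    rw [if_neg hk]
    exact Finset.prod_eq_zero (Finset.mem_univ j) (by simp [hj])

end SP
namespace SP
variable {d : ℕ}

lemma integrableOn_box {E : Type*} [NormedAddCommGroup E] {g : (Fin d → ℝ) → E}
    (hg : Continuous g) : IntegrableOn g (torusBox d) :=
  (hg.locallyIntegrable.integrableOn_isCompact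
    (isCompact_univ_pi fun _ => isCompact_Icc)).mono_set
    (Set.pi_mono fun _ _ => Set.Ico_subset_Icc_self)

lemma integral_trig_mul_conj (k l : Fin d → ℤ) :
    ∫ x in torusBox d, trigMono d k x * (starRingEnd ℂ) (trigMono d l x) =
      if k = l then (((2*π)^d : ℝ) : ℂ) else 0 := by
  have : ∀ x, trigMono d k x * (starRingEnd ℂ) (trigMono d l x) = trigMono d (k - l) x := by
    intro x
    rw [conj_trigMono, ← trigMono_add, sub_eq_add_neg]
  simp only [this]
  rw [integral_trigMono_box]
  congr 1
  simp [sub_eq_zero]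

lemma integral_poly_mul_conj (Q : Finset (Fin d → ℤ)) (b : (Fin d → ℤ) → ℂ)
    {k : Fin d → ℤ} (hk : k ∈ Q) :
    ∫ x in torusBox d, (∑ l ∈ Q, b l * trigMono d l x) * (starRingEnd ℂ) (trigMono d k x) =
      (((2*π)^d : ℝ) : ℂ) * b k := by
  have hpt : ∀ x, (∑ l ∈ Q, b l * trigMono d l x) * (starRingEnd ℂ) (trigMono d k x) =
      ∑ l ∈ Q, b l * (trigMono d l x * (starRingEnd ℂ) (trigMono d k x)) := by
    intro x
    rw [Finset.sum_mul]
    exact Finset.sum_congr rfl fun l _ => by ring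
  simp only [hpt]
  rw [MeasureTheory.integral_finset_sum]
  · have : ∀ l ∈ Q, (∫ x in torusBox d,
        b l * (trigMono d l x * (starRingEnd ℂ) (trigMono d k x))) =
        b l * if l = k then (((2*π)^d : ℝ) : ℂ) else 0 := by
      intro l _
      rw [MeasureTheory.integral_const_mul, integral_trig_mul_conj]
    rw [Finset.sum_congr rfl this]
    simp only [mul_ite, mul_zero]
    rw [Finset.sum_ite_eq' Q k (fun l => b l * (((2*π)^d : ℝ) : ℂ))]
    simp [hk, mul_comm]
  · intro l _
    exact (integrableOn_box ((continuous_trigMono l).mul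
      ((RCLike.continuous_conj).comp (continuous_trigMono k)))).const_mul _

lemma norm_sq_complex (z : ℂ) : ‖z‖^2 = Complex.normSq z := by
  rw [Complex.sq_norm]

lemma mul_conj_self (z : ℂ) : z * (starRingEnd ℂ) z = ((‖z‖^2 : ℝ) : ℂ) := by
  rw [Complex.mul_conj, norm_sq_complex]

lemma integral_normSq_poly (Q : Finset (Fin d → ℤ)) (b : (Fin d → ℤ) → ℂ) :
    ∫ x in torusBox d, ‖∑ k ∈ Q, b k * trigMono d k x‖^2 =
      (2*π)^d * ∑ k ∈ Q, ‖b k‖^2 := by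
  set g : (Fin d → ℝ) → ℂ := fun x => ∑ k ∈ Q, b k * trigMono d k x with hg
  have hgc : Continuous g := by
    apply continuous_finset_sum
    intro k _
    exact continuous_const.mul (continuous_trigMono k)
  have hpt : ∀ x, ((‖g x‖^2 : ℝ) : ℂ) = g x * (starRingEnd ℂ) (g x) := fun x =>
    (mul_conj_self (g x)).symm
  have key : ∫ x in torusBox d, g x * (starRingEnd ℂ) (g x) =
      (((2*π)^d : ℝ) : ℂ) * ∑ k ∈ Q, ((‖b k‖^2 : ℝ) : ℂ) := by
    have expand : ∀ x, g x * (starRingEnd ℂ) (g x) =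
        ∑ l ∈ Q, (starRingEnd ℂ) (b l) * (g x * (starRingEnd ℂ) (trigMono d l x)) := by
      intro x
      conv_lhs => rw [hg]
      rw [map_sum, Finset.mul_sum]
      exact Finset.sum_congr rfl fun l _ => by rw [map_mul]; ring
    simp only [expand]
    rw [MeasureTheory.integral_finset_sum]
    · have : ∀ l ∈ Q, (∫ x in torusBox d,
          (starRingEnd ℂ) (b l) * (g x * (starRingEnd ℂ) (trigMono d l x))) =
          (((2*π)^d : ℝ) : ℂ) * ((‖b l‖^2 : ℝ) : ℂ) := by
        intro l hl
        rw [MeasureTheory.integral_const_mul, hg, integral_poly_mul_conj Q b hl]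
        rw [← mul_conj_self (b l)]
        ring
      rw [Finset.sum_congr rfl this, ← Finset.mul_sum]
    · intro l _
      exact (integrableOn_box (hgc.mul
        ((RCLike.continuous_conj).comp (continuous_trigMono l)))).const_mul _
  have : ((∫ x in torusBox d, ‖g x‖^2 : ℝ) : ℂ) =
      (((2*π)^d * ∑ k ∈ Q, ‖b k‖^2 : ℝ) : ℂ) := by
    have h2 : ∫ x in torusBox d, ((‖g x‖^2 : ℝ) : ℂ) =
        ((∫ x in torusBox d, ‖g x‖^2 : ℝ) : ℂ) := integral_ofReal
    rw [← h2]
    simp only [hpt]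
    rw [key]
    push_cast
    ring
  exact_mod_cast this

end SP
namespace SP
variable {d : ℕ}

lemma alg1 (A w : ℂ) (r : ℝ) :
    ‖A - w‖^2 * r = ‖A‖^2 * r - 2*((starRingEnd ℂ) A * (w * (r:ℂ))).re + ‖w‖^2 * r := by
  simp only [norm_sq_complex, Complex.normSq_apply, Complex.mul_re, Complex.mul_im,
    Complex.sub_re, Complex.sub_im, Complex.conj_re, Complex.conj_im,
    Complex.ofReal_re, Complex.ofReal_im]
  ring

lemma alg2 (A z : ℂ) : ‖A - z‖^2 = ‖A‖^2 - 2*((starRingEnd ℂ) A * z).re + ‖z‖^2 := by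
  simp only [norm_sq_complex, Complex.normSq_apply, Complex.mul_re, Complex.mul_im,
    Complex.sub_re, Complex.sub_im, Complex.conj_re, Complex.conj_im]
  ring

section Step

variable (Q : Finset (Fin d → ℤ)) (cc : (Fin d → ℤ) → ℂ) (f : (Fin d → ℝ) → ℂ)
  (L : ℝ)

/-- the sign function -/
def sgn (f : (Fin d → ℝ) → ℂ) (y : Fin d → ℝ) : ℂ := f y / ((‖f y‖ : ℝ) : ℂ)

lemma sgn_mul_norm (y : Fin d → ℝ) : sgn f y * ((‖f y‖ : ℝ) : ℂ) = f y := by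
  by_cases h : f y = 0
  · simp [sgn, h]
  · rw [sgn, div_mul_cancel₀]
    simpa using norm_ne_zero_iff.mpr h

lemma norm_sgn_sq_mul (y : Fin d → ℝ) : ‖sgn f y‖^2 * ‖f y‖ = ‖f y‖ := by
  by_cases h : f y = 0
  · simp [sgn, h]
  · have h1 : ‖f y‖ ≠ 0 := norm_ne_zero_iff.mpr h
    rw [sgn, norm_div]
    simp only [Complex.norm_real, Real.norm_eq_abs, abs_of_nonneg (norm_nonneg (f y))]
    field_simp

lemma step (hfc : Continuous f) (hL : 0 < L)
    (hint1 : ∫ x in torusBox d, ‖f x‖ = (2*π)^d * L)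
    (hint2 : ∀ k ∈ Q, (∫ x in torusBox d, f x * (starRingEnd ℂ) (trigMono d k x)) =
      (((2*π)^d : ℝ) : ℂ) * cc k)
    (ρ : (Fin d → ℤ) → ℂ) :
    ∃ y : Fin d → ℝ, ∑ k ∈ Q, ‖ρ k + (cc k - (L:ℂ) * sgn f y *
        (starRingEnd ℂ) (trigMono d k y))‖^2 ≤
      ∑ k ∈ Q, ‖ρ k‖^2 + Q.card * L^2 := by
  set N : ℝ := (2*π)^d with hN
  have hNpos : 0 < N := by positivity
  set B : ℝ := ∑ k ∈ Q, ‖ρ k‖^2 + Q.card * L^2 with hB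
  by_contra hcon
  push_neg at hcon
  set A : (Fin d → ℤ) → ℂ := fun k => ρ k + cc k with hA
  set H : (Fin d → ℝ) → ℝ := fun y => ∑ k ∈ Q,
    (‖A k‖^2 * ‖f y‖ - 2*L*((starRingEnd ℂ) (A k) *
      (f y * (starRingEnd ℂ) (trigMono d k y))).re + L^2 * ‖f y‖) with hH
  -- pointwise identity
  have hpt : ∀ y, (∑ k ∈ Q, ‖ρ k + (cc k - (L:ℂ) * sgn f y *
      (starRingEnd ℂ) (trigMono d k y))‖^2) * ‖f y‖ = H y := by
    intro y
    rw [Finset.sum_mul, hH]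
    apply Finset.sum_congr rfl
    intro k _
    have e1 : ρ k + (cc k - (L:ℂ) * sgn f y * (starRingEnd ℂ) (trigMono d k y)) =
        A k - (L:ℂ) * sgn f y * (starRingEnd ℂ) (trigMono d k y) := by rw [hA]; ring
    rw [e1, alg1]
    have e2 : (L:ℂ) * sgn f y * (starRingEnd ℂ) (trigMono d k y) * ((‖f y‖:ℝ):ℂ) =
        (L:ℂ) * (f y * (starRingEnd ℂ) (trigMono d k y)) := by
      rw [mul_comm ((L:ℂ) * sgn f y) _, mul_assoc, mul_assoc, sgn_mul_norm f y]; ring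
    rw [e2]
    have e3 : ((starRingEnd ℂ) (A k) * ((L:ℂ) * (f y * (starRingEnd ℂ) (trigMono d k y)))).re
        = L * ((starRingEnd ℂ) (A k) * (f y * (starRingEnd ℂ) (trigMono d k y))).re := by
      rw [show (starRingEnd ℂ) (A k) * ((L:ℂ) * (f y * (starRingEnd ℂ) (trigMono d k y))) =
        ((L:ℝ):ℂ) * ((starRingEnd ℂ) (A k) * (f y * (starRingEnd ℂ) (trigMono d k y))) by ring,
        Complex.re_ofReal_mul]
    rw [e3]
    have e4 : ‖(L:ℂ) * sgn f y * (starRingEnd ℂ) (trigMono d k y)‖^2 * ‖f y‖ = L^2 * ‖f y‖ := by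
      rw [norm_mul, norm_mul, RCLike.norm_conj, norm_trigMono]
      rw [mul_pow, mul_pow, one_pow, mul_one, mul_assoc, norm_sgn_sq_mul f y]
      simp [sq_abs]
    rw [e4]
    ring
  -- integrability of pieces
  have hcont_fk : ∀ k : Fin d → ℤ, Continuous (fun y => (starRingEnd ℂ) (A k) *
      (f y * (starRingEnd ℂ) (trigMono d k y))) := fun k =>
    continuous_const.mul (hfc.mul ((RCLike.continuous_conj).comp (continuous_trigMono k)))
  have hcontH : Continuous H := by
    apply continuous_finset_sum
    intro k _
    apply Continuous.add
    · apply Continuous.sub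
      · exact continuous_const.mul hfc.norm
      · exact continuous_const.mul (Complex.continuous_re.comp (hcont_fk k))
    · exact continuous_const.mul hfc.norm
  -- integral of H
  have hHint : ∫ y in torusBox d, H y = ∑ k ∈ Q,
      (‖A k‖^2 * (N * L) - 2*L*(N * ((starRingEnd ℂ) (A k) * cc k).re) + L^2 * (N * L)) := by
    rw [hH, MeasureTheory.integral_finset_sum]
    · apply Finset.sum_congr rfl
      intro k hk
      have i1 : IntegrableOn (fun y => ‖A k‖^2 * ‖f y‖) (torusBox d) :=
        integrableOn_box (continuous_const.mul hfc.norm)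
      have i2 : IntegrableOn (fun y => 2*L*((starRingEnd ℂ) (A k) *
          (f y * (starRingEnd ℂ) (trigMono d k y))).re) (torusBox d) :=
        integrableOn_box (continuous_const.mul (Complex.continuous_re.comp (hcont_fk k)))
      have i3 : IntegrableOn (fun y => L^2 * ‖f y‖) (torusBox d) :=
        integrableOn_box (continuous_const.mul hfc.norm)
      have i12 : IntegrableOn (fun y => ‖A k‖^2 * ‖f y‖ - 2*L*((starRingEnd ℂ) (A k) *
          (f y * (starRingEnd ℂ) (trigMono d k y))).re) (torusBox d) := i1.sub i2
      rw [MeasureTheory.integral_add i12 i3, MeasureTheory.integral_sub i1 i2]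
      congr 1
      · congr 1
        · rw [MeasureTheory.integral_const_mul, hint1]
        · rw [MeasureTheory.integral_const_mul]
          congr 1
          have hre : ∫ y in torusBox d, ((starRingEnd ℂ) (A k) *
              (f y * (starRingEnd ℂ) (trigMono d k y))).re =
              (∫ y in torusBox d, (starRingEnd ℂ) (A k) *
                (f y * (starRingEnd ℂ) (trigMono d k y))).re := by
            have := integral_re (μ := volume.restrict (torusBox d))
              (f := fun y => (starRingEnd ℂ) (A k) *
                (f y * (starRingEnd ℂ) (trigMono d k y)))
              (integrableOn_box (hcont_fk k))
            simpa [RCLike.re_eq_complex_re] using this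
          rw [hre, MeasureTheory.integral_const_mul, hint2 k hk]
          rw [show (starRingEnd ℂ) (A k) * ((N:ℂ) * cc k) =
            ((N:ℝ):ℂ) * ((starRingEnd ℂ) (A k) * cc k) by ring, Complex.re_ofReal_mul]
      · rw [MeasureTheory.integral_const_mul, hint1]
    · intro k _
      apply Integrable.add
      · apply Integrable.sub
        · exact integrableOn_box (continuous_const.mul hfc.norm)
        · exact integrableOn_box (continuous_const.mul (Complex.continuous_re.comp (hcont_fk k)))
      · exact integrableOn_box (continuous_const.mul hfc.norm)
  -- bound on the integral of H
  have hbound : ∫ y in torusBox d, H y ≤ N * L * B := by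
    rw [hHint, hB]
    have per : ∀ k ∈ Q, ‖A k‖^2 * (N * L) - 2*L*(N * ((starRingEnd ℂ) (A k) * cc k).re)
        + L^2 * (N * L) ≤ N * L * ‖ρ k‖^2 + N * L * L^2 := by
      intro k _
      have hAk : A k - cc k = ρ k := by rw [hA]; ring
      have h1 : ‖ρ k‖^2 = ‖A k‖^2 - 2*((starRingEnd ℂ) (A k) * cc k).re + ‖cc k‖^2 := by
        rw [← hAk]; exact alg2 _ _
      have h2 : N*L*‖ρ k‖^2 = N*L*‖A k‖^2 - 2*(N*L)*((starRingEnd ℂ) (A k) * cc k).re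
          + N*L*‖cc k‖^2 := by rw [h1]; ring
      nlinarith [h2, mul_nonneg (mul_nonneg hNpos.le hL.le) (sq_nonneg ‖cc k‖)]
    calc ∑ k ∈ Q, (‖A k‖^2 * (N * L) - 2*L*(N * ((starRingEnd ℂ) (A k) * cc k).re)
          + L^2 * (N * L))
        ≤ ∑ k ∈ Q, (N * L * ‖ρ k‖^2 + N * L * L^2) := Finset.sum_le_sum per
      _ = N * L * (∑ k ∈ Q, ‖ρ k‖^2 + Q.card * L^2) := by
          rw [Finset.sum_add_distrib, ← Finset.mul_sum, Finset.sum_const, nsmul_eq_mul]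
          ring
  -- contradiction
  have hGnonneg : ∀ y, 0 ≤ H y - B * ‖f y‖ := by
    intro y
    nlinarith [hpt y, mul_le_mul_of_nonneg_right (hcon y).le (norm_nonneg (f y))]
  have hGint : IntegrableOn (fun y => H y - B * ‖f y‖) (torusBox d) :=
    (integrableOn_box hcontH).sub (integrableOn_box (continuous_const.mul hfc.norm))
  have hint3 : ∫ y in torusBox d, (H y - B * ‖f y‖) =
      (∫ y in torusBox d, H y) - B * (N * L) := by
    rw [MeasureTheory.integral_sub (integrableOn_box hcontH)
      (integrableOn_box (g := fun y => B * ‖f y‖) (continuous_const.mul hfc.norm)),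
      MeasureTheory.integral_const_mul, hint1]
  have hle0 : ∫ y in torusBox d, (H y - B * ‖f y‖) ≤ 0 := by
    rw [hint3]; nlinarith [hbound]
  have hge0 : 0 ≤ ∫ y in torusBox d, (H y - B * ‖f y‖) :=
    MeasureTheory.setIntegral_nonneg measurableSet_torusBox (fun y _ => hGnonneg y)
  have hzero : ∫ y in torusBox d, (H y - B * ‖f y‖) = 0 := le_antisymm hle0 hge0
  have haezero := (MeasureTheory.integral_eq_zero_iff_of_nonneg_ae
    (Filter.Eventually.of_forall (fun y => hGnonneg y)) hGint).mp hzero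
  have hfzero : (fun y => ‖f y‖) =ᵐ[volume.restrict (torusBox d)] 0 := by
    filter_upwards [haezero] with y hy
    have hy' : H y - B * ‖f y‖ = 0 := hy
    show ‖f y‖ = (0:ℝ)
    have hle : ‖f y‖ ≤ 0 := by nlinarith [hpt y, hy', sub_pos.mpr (hcon y)]
    exact le_antisymm hle (norm_nonneg _)
  have hzf : ∫ y in torusBox d, ‖f y‖ = 0 := by
    rw [MeasureTheory.integral_congr_ae hfzero]; simp
  rw [hint1] at hzf
  nlinarith [hNpos, hL]

end Step
end SP
namespace SP
variable {d : ℕ}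

lemma exists_points (Q : Finset (Fin d → ℤ)) (cc : (Fin d → ℤ) → ℂ)
    (f : (Fin d → ℝ) → ℂ) (L : ℝ) (hfc : Continuous f) (hL : 0 < L)
    (hint1 : ∫ x in torusBox d, ‖f x‖ = (2*π)^d * L)
    (hint2 : ∀ k ∈ Q, (∫ x in torusBox d, f x * (starRingEnd ℂ) (trigMono d k x)) =
      (((2*π)^d : ℝ) : ℂ) * cc k) :
    ∀ n : ℕ, ∃ y : Fin n → (Fin d → ℝ),
      ∑ k ∈ Q, ‖(n:ℂ) * cc k - (L:ℂ) * ∑ j, sgn f (y j) *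
        (starRingEnd ℂ) (trigMono d k (y j))‖^2 ≤ n * L^2 * Q.card := by
  intro n
  induction n with
  | zero => exact ⟨fun i => i.elim0, by simp⟩
  | succ n ih =>
    obtain ⟨y, hy⟩ := ih
    set ρ : (Fin d → ℤ) → ℂ := fun k => (n:ℂ) * cc k - (L:ℂ) * ∑ j, sgn f (y j) *
      (starRingEnd ℂ) (trigMono d k (y j)) with hρ
    obtain ⟨y0, hy0⟩ := step Q cc f L hfc hL hint1 hint2 ρ
    refine ⟨Fin.snoc y y0, ?_⟩
    have hsum : ∀ k : Fin d → ℤ, ((n+1 : ℕ):ℂ) * cc k - (L:ℂ) *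
        ∑ j : Fin (n+1), sgn f ((Fin.snoc y y0 : Fin (n+1) → Fin d → ℝ) j) *
          (starRingEnd ℂ) (trigMono d k ((Fin.snoc y y0 : Fin (n+1) → Fin d → ℝ) j)) =
        ρ k + (cc k - (L:ℂ) * sgn f y0 * (starRingEnd ℂ) (trigMono d k y0)) := by
      intro k
      rw [Fin.sum_univ_castSucc]
      simp only [Fin.snoc_castSucc, Fin.snoc_last, hρ]
      push_cast
      ring
    calc ∑ k ∈ Q, ‖((n+1 : ℕ):ℂ) * cc k - (L:ℂ) *
          ∑ j : Fin (n+1), sgn f ((Fin.snoc y y0 : Fin (n+1) → Fin d → ℝ) j) *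
            (starRingEnd ℂ) (trigMono d k ((Fin.snoc y y0 : Fin (n+1) → Fin d → ℝ) j))‖^2
        = ∑ k ∈ Q, ‖ρ k + (cc k - (L:ℂ) * sgn f y0 *
            (starRingEnd ℂ) (trigMono d k y0))‖^2 := by
          exact Finset.sum_congr rfl fun k _ => by rw [hsum k]
      _ ≤ ∑ k ∈ Q, ‖ρ k‖^2 + Q.card * L^2 := hy0
      _ ≤ (n+1 : ℕ) * L^2 * Q.card := by push_cast; nlinarith [hy]

end SP
/-- **Theorem 2.3.** For any finite `Q ⊂ ℤ^d`, every `f ∈ 𝒯(Q)` with `‖f‖₁ ≤ 1` admits an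
`m`-term approximant from the dictionary `𝒟¹(Q) = {w_Q(· - y)}_{y ∈ 𝕋^d}` with `L₂` error
at most `(|Q|/m)^{1/2}`; that is, `σ_m(𝒯(Q)₁, 𝒟¹(Q))₂ ≤ (|Q|/m)^{1/2}`. -/
theorem sigma_m_TQ1_D1 (d : ℕ) (Q : Finset (Fin d → ℤ)) (c : (Fin d → ℤ) → ℂ)
    (f : (Fin d → ℝ) → ℂ) (hf : f = fun x => ∑ k ∈ Q, c k * trigMono d k x)
    (hf1 : torusL1 d f ≤ 1) (m : ℕ) (hm : 1 ≤ m) :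
    ∃ (y : Fin m → Fin d → ℝ) (a : Fin m → ℂ),
      torusL2 d (fun x => f x - ∑ j, a j * wQ d Q (x - y j)) ≤
        Real.sqrt ((Q.card : ℝ) / m) := by
  classical
  set N : ℝ := (2*π)^d with hN
  have hNpos : 0 < N := by rw [hN]; positivity
  set L : ℝ := torusL1 d f with hLdef
  have hfc : Continuous f := by
    rw [hf]
    exact continuous_finset_sum _ fun k _ => continuous_const.mul (SP.continuous_trigMono k)
  have hint2 : ∀ k ∈ Q, (∫ x in torusBox d, f x * (starRingEnd ℂ) (trigMono d k x)) =
      ((N:ℝ):ℂ) * c k := by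
    intro k hk; rw [hf]; exact SP.integral_poly_mul_conj Q c hk
  have hint1 : ∫ x in torusBox d, ‖f x‖ = N * L := by
    rw [hLdef, torusL1, ← hN]
    field_simp
  have hLnonneg : 0 ≤ L := by
    rw [hLdef, torusL1]
    apply mul_nonneg (by positivity)
    exact MeasureTheory.setIntegral_nonneg SP.measurableSet_torusBox fun x _ => norm_nonneg _
  have hL2calc : ∀ b : (Fin d → ℤ) → ℂ,
      torusL2 d (fun x => ∑ k ∈ Q, b k * trigMono d k x) =
        Real.sqrt (∑ k ∈ Q, ‖b k‖^2) := by
    intro b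
    rw [torusL2, SP.integral_normSq_poly, ← hN, inv_mul_cancel_left₀ (ne_of_gt hNpos)]
  have hmposR : (0:ℝ) < m := by exact_mod_cast hm
  rcases eq_or_lt_of_le hLnonneg with hL0 | hLpos
  · -- degenerate case : L = 0, f has all zero coefficients
    have hcb : ∀ k ∈ Q, c k = 0 := by
      intro k hk
      have h2 := hint2 k hk
      have h3 : ‖∫ x in torusBox d, f x * (starRingEnd ℂ) (trigMono d k x)‖ ≤
          ∫ x in torusBox d, ‖f x * (starRingEnd ℂ) (trigMono d k x)‖ :=
        MeasureTheory.norm_integral_le_integral_norm _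
      rw [h2] at h3
      simp only [norm_mul, RCLike.norm_conj, SP.norm_trigMono, mul_one] at h3
      rw [hint1, ← hL0, mul_zero, Complex.norm_real, Real.norm_eq_abs,
        abs_of_pos hNpos] at h3
      have h4 : ‖c k‖ ≤ 0 := by nlinarith [norm_nonneg (c k)]
      exact norm_le_zero_iff.mp h4
    refine ⟨fun _ => 0, fun _ => 0, ?_⟩
    simp only [zero_mul, Finset.sum_const_zero, sub_zero, hf]
    rw [hL2calc c]
    have : ∑ k ∈ Q, ‖c k‖^2 = 0 := Finset.sum_eq_zero fun k hk => by rw [hcb k hk]; simp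
    rw [this, Real.sqrt_zero]
    exact Real.sqrt_nonneg _
  · -- main case
    have hQ : Q.Nonempty := by
      rcases Finset.eq_empty_or_nonempty Q with hQ | hQ
      · exfalso
        rw [hQ] at hf
        simp only [Finset.sum_empty] at hf
        rw [hf] at hint1
        simp only [norm_zero, MeasureTheory.integral_zero] at hint1
        nlinarith
      · exact hQ
    have hQpos : (0:ℝ) < Q.card := by exact_mod_cast Finset.card_pos.mpr hQ
    obtain ⟨y, hy⟩ := SP.exists_points Q c f L hfc hLpos hint1 hint2 m
    set r : (Fin d → ℤ) → ℂ := fun k => c k - ((L/m : ℝ):ℂ) *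
      ∑ j, SP.sgn f (y j) * (starRingEnd ℂ) (trigMono d k (y j)) with hr
    refine ⟨y, fun j => ((L * Real.sqrt Q.card / m : ℝ) : ℂ) * SP.sgn f (y j), ?_⟩
    have hsqpos : (0:ℝ) < Real.sqrt Q.card := Real.sqrt_pos.mpr hQpos
    have hsq : ((Real.sqrt (Q.card : ℝ) : ℝ) : ℂ) ≠ 0 :=
      Complex.ofReal_ne_zero.mpr (ne_of_gt hsqpos)
    have hfun : (fun x => f x - ∑ j, (((L * Real.sqrt Q.card / m : ℝ) : ℂ) *
        SP.sgn f (y j)) * wQ d Q (x - y j)) = fun x => ∑ k ∈ Q, r k * trigMono d k x := by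
      funext x
      have hterm : ∀ j, (((L * Real.sqrt Q.card / m : ℝ) : ℂ) * SP.sgn f (y j)) *
          wQ d Q (x - y j) = ∑ k ∈ Q, ((L/m : ℝ):ℂ) * SP.sgn f (y j) *
            (trigMono d k x * (starRingEnd ℂ) (trigMono d k (y j))) := by
        intro j
        rw [wQ, Finset.mul_sum, Finset.mul_sum]
        apply Finset.sum_congr rfl
        intro k _
        rw [SP.trigMono_sub_arg]
        rw [show (((L * Real.sqrt Q.card / m : ℝ) : ℂ)) =
          ((L/m : ℝ):ℂ) * ((Real.sqrt (Q.card:ℝ) : ℝ):ℂ) by push_cast; ring]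
        field_simp
      rw [Finset.sum_congr rfl (fun j _ => hterm j), Finset.sum_comm]
      simp only [hf]
      rw [← Finset.sum_sub_distrib]
      apply Finset.sum_congr rfl
      intro k _
      have expand : r k * trigMono d k x = c k * trigMono d k x -
          ∑ j, ((L/m : ℝ):ℂ) * SP.sgn f (y j) *
            (trigMono d k x * (starRingEnd ℂ) (trigMono d k (y j))) := by
        rw [hr, sub_mul, Finset.mul_sum, Finset.sum_mul]
        congr 1
        apply Finset.sum_congr rfl
        intro j _
        ring
      rw [expand, ← hf]
    rw [hfun, hL2calc r]
    apply Real.sqrt_le_sqrt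
    have hmC : ((m:ℕ):ℂ) ≠ 0 := Nat.cast_ne_zero.mpr (by omega)
    have hrk : ∀ k : Fin d → ℤ, ‖r k‖^2 = ‖(m:ℂ) * c k - (L:ℂ) *
        ∑ j, SP.sgn f (y j) * (starRingEnd ℂ) (trigMono d k (y j))‖^2 / (m:ℝ)^2 := by
      intro k
      have : r k = ((m:ℕ):ℂ)⁻¹ * ((m:ℂ) * c k - (L:ℂ) *
          ∑ j, SP.sgn f (y j) * (starRingEnd ℂ) (trigMono d k (y j))) := by
        rw [hr]
        push_cast
        field_simp
      rw [this, norm_mul, norm_inv, Complex.norm_natCast, mul_pow]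
      rw [inv_pow]
      ring
    have hsum : ∑ k ∈ Q, ‖r k‖^2 = (∑ k ∈ Q, ‖(m:ℂ) * c k - (L:ℂ) *
        ∑ j, SP.sgn f (y j) * (starRingEnd ℂ) (trigMono d k (y j))‖^2) / (m:ℝ)^2 := by
      rw [Finset.sum_congr rfl fun k _ => hrk k, ← Finset.sum_div]
    rw [hsum, div_le_iff₀ (by positivity)]
    have hL1 : L ≤ 1 := hf1
    have hfinal : (Q.card : ℝ) / m * (m:ℝ)^2 = (Q.card : ℝ) * m := by
      field_simp
    rw [hfinal]
    calc (∑ k ∈ Q, ‖(m:ℂ) * c k - (L:ℂ) *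
          ∑ j, SP.sgn f (y j) * (starRingEnd ℂ) (trigMono d k (y j))‖^2)
        ≤ m * L^2 * Q.card := hy
      _ ≤ (Q.card : ℝ) * m := by
          have hLsq : L^2 ≤ 1 := by nlinarith
          nlinarith [mul_nonneg (mul_nonneg (sub_nonneg.mpr hLsq) hmposR.le) hQpos.le]

end
end

section
/- Let {u_i}_{i=1}^N be a real orthonormal system on Ω satisfying conditions B and C, let g_i := K₂^{−1/2} u_i, and for t = Σ_{i=1}^N c_i g_i ∈ X_N set ‖t‖_A := Σ_{i=1}^N |c_i|. Then for every t ∈ X_N and every m ≥ 1 there exists an m-term polynomial G_m(t) = Σ_{j∈Λ} a_j g_j with |Λ| ≤ m such that ‖t − G_m(t)‖_∞ ≤ C m^{−1/2} (ln N)^{1/2} ‖t‖_A and ‖G_m(t)‖_A = ‖t‖_A, where C = C(K₃,K₄). -/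
open MeasureTheory Real


open Finset in
lemma count_good_maps (q n : ℕ) (hq : 1 ≤ q) :
    (((Finset.univ.filter (fun f : Fin (2*q) → Fin n =>
        ∀ k, (Finset.univ.filter (fun t => f t = k)).card ≠ 1)).card : ℝ))
      ≤ (Real.exp 1 * q * n)^q := by
  classical
  set Gd := (Finset.univ.filter (fun f : Fin (2*q) → Fin n =>
        ∀ k, (Finset.univ.filter (fun t => f t = k)).card ≠ 1)) with hGd
  have himage : ∀ f ∈ Gd, (Finset.univ.image f).card ≤ q := by
    intro f hf
    simp only [hGd, Finset.mem_filter] at hf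
    have hcard : (Finset.univ : Finset (Fin (2*q))).card
        = ∑ k ∈ Finset.univ.image f, (Finset.univ.filter (fun t => f t = k)).card :=
      Finset.card_eq_sum_card_fiberwise (fun x _ => Finset.mem_image_of_mem f (Finset.mem_univ x))
    have h2 : 2 * (Finset.univ.image f).card ≤ 2 * q := by
      calc 2 * (Finset.univ.image f).card = ∑ _k ∈ Finset.univ.image f, 2 := by
            rw [Finset.sum_const, smul_eq_mul, mul_comm]
        _ ≤ ∑ k ∈ Finset.univ.image f, (Finset.univ.filter (fun t => f t = k)).card := by
            apply Finset.sum_le_sum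
            intro k hk
            have h1 : 1 ≤ (Finset.univ.filter (fun t => f t = k)).card := by
              obtain ⟨t, _, ht⟩ := Finset.mem_image.1 hk
              exact Finset.card_pos.2 ⟨t, Finset.mem_filter.2 ⟨Finset.mem_univ t, ht⟩⟩
            have := hf.2 k
            omega
        _ = (Finset.univ : Finset (Fin (2*q))).card := hcard.symm
        _ = 2 * q := by simp
    omega
  have hexpq : (q:ℝ)^q ≤ Real.exp 1 ^ q * (q.factorial : ℝ) := by
    have h1 : (q:ℝ)^q / (q.factorial:ℝ) ≤ Real.exp q := by
      have := Real.sum_le_exp_of_nonneg (x := (q:ℝ)) (by positivity) (q+1)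
      refine le_trans ?_ this
      exact Finset.single_le_sum (f := fun i => (q:ℝ)^i / (i.factorial:ℝ))
        (fun i _ => by positivity) (Finset.self_mem_range_succ q)
    have hfac : (0:ℝ) < (q.factorial:ℝ) := by positivity
    rw [div_le_iff₀ hfac] at h1
    calc (q:ℝ)^q ≤ Real.exp q * q.factorial := h1
      _ = Real.exp 1 ^ q * q.factorial := by rw [← Real.exp_nat_mul]; norm_num
  by_cases hnq : n ≤ q
  · calc (Gd.card : ℝ) ≤ (Fintype.card (Fin (2*q) → Fin n) : ℝ) := by
          exact_mod_cast Finset.card_le_card (Finset.filter_subset _ _)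
      _ = ((n:ℝ))^(2*q) := by rw [Fintype.card_fun]; push_cast; simp
      _ = ((n:ℝ)*n)^q := by rw [two_mul, pow_add, ← mul_pow]
      _ ≤ (Real.exp 1 * q * n)^q := by
          apply pow_le_pow_left₀ (by positivity)
          have h1 : (1:ℝ) ≤ Real.exp 1 := by
            have := Real.exp_one_gt_d9; linarith
          have h2 : (n:ℝ) ≤ q := by exact_mod_cast hnq
          have h3 : (n:ℝ)*n ≤ (q:ℝ)*n := mul_le_mul_of_nonneg_right h2 (Nat.cast_nonneg n)
          have h4 : (q:ℝ)*n ≤ Real.exp 1 * ((q:ℝ)*n) := le_mul_of_one_le_left (by positivity) h1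
          calc (n:ℝ)*n ≤ (q:ℝ)*n := h3
            _ ≤ Real.exp 1 * ((q:ℝ)*n) := h4
            _ = Real.exp 1 * q * n := by ring
  · push_neg at hnq
    -- q < n case
    have hsub : Gd ⊆ (Finset.univ.powersetCard q).biUnion
        (fun T => Fintype.piFinset (fun _ : Fin (2*q) => T)) := by
      intro f hf
      obtain ⟨T, hsubT, hTcard⟩ := Finset.exists_superset_card_eq (himage f hf)
          (by simp [Fintype.card_fin]; omega)
      refine Finset.mem_biUnion.2 ⟨T, ?_, ?_⟩
      · exact Finset.mem_powersetCard.2 ⟨Finset.subset_univ T, hTcard⟩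
      · refine Fintype.mem_piFinset.2 fun t => ?_
        exact hsubT (Finset.mem_image_of_mem f (Finset.mem_univ t))
    have hcount : Gd.card ≤ n.choose q * q^(2*q) := by
      calc Gd.card ≤ ∑ T ∈ Finset.univ.powersetCard q,
            (Fintype.piFinset (fun _ : Fin (2*q) => T)).card :=
          le_trans (Finset.card_le_card hsub) Finset.card_biUnion_le
        _ = ∑ T ∈ Finset.univ.powersetCard q, q^(2*q) := by
            apply Finset.sum_congr rfl
            intro T hT
            rw [Fintype.card_piFinset]
            rw [(Finset.mem_powersetCard.1 hT).2]
            simp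
        _ = n.choose q * q^(2*q) := by
            rw [Finset.sum_const, smul_eq_mul, Finset.card_powersetCard, Finset.card_fin]
    have hchoose : (n.choose q : ℝ) * (q.factorial : ℝ) ≤ (n:ℝ)^q := by
      have := Nat.descFactorial_le_pow n q
      rw [Nat.descFactorial_eq_factorial_mul_choose] at this
      exact_mod_cast by rw [mul_comm]; exact_mod_cast this
    have hfac : (0:ℝ) < (q.factorial:ℝ) := by positivity
    calc (Gd.card : ℝ) ≤ (n.choose q : ℝ) * (q:ℝ)^(2*q) := by exact_mod_cast hcount
      _ = (n.choose q : ℝ) * ((q:ℝ)^q * (q:ℝ)^q) := by rw [two_mul, pow_add]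
      _ ≤ (n.choose q : ℝ) * ((q:ℝ)^q * (Real.exp 1 ^ q * (q.factorial : ℝ))) := by
          apply mul_le_mul_of_nonneg_left (by
            exact mul_le_mul_of_nonneg_left hexpq (by positivity)) (by positivity)
      _ = ((n.choose q : ℝ) * (q.factorial : ℝ)) * ((q:ℝ)^q * Real.exp 1 ^ q) := by ring
      _ ≤ (n:ℝ)^q * ((q:ℝ)^q * Real.exp 1 ^ q) := by
          apply mul_le_mul_of_nonneg_right hchoose (by positivity)
      _ = (Real.exp 1 * q * n)^q := by rw [mul_pow, mul_pow]; ring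

lemma core_moment {N n q : ℕ} (w Z : Fin N → ℝ) (hw0 : ∀ i, 0 ≤ w i)
    (hZ0 : ∑ i, w i * Z i = 0) {B : ℝ}
    (hZB : ∀ i, |Z i| ≤ B) (hw1 : ∑ i, w i = 1) (hq : 1 ≤ q) :
    ∑ j : Fin n → Fin N, (∏ k, w (j k)) * (∑ k, Z (j k)) ^ (2*q)
      ≤ (Real.exp 1 * q * n)^q * B^(2*q) := by
  classical
  have hB : 0 ≤ B := by
    rcases Nat.eq_zero_or_pos N with h | h
    · exfalso; subst h; simp at hw1
    · exact le_trans (abs_nonneg _) (hZB ⟨0, h⟩)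
  set e : (Fin (2*q) → Fin n) → Fin n → ℕ :=
    fun f k => (Finset.univ.filter (fun t => f t = k)).card with he
  set M : ℕ → ℝ := fun d => ∑ i, w i * Z i ^ d with hM
  have expand : ∀ j : Fin n → Fin N,
      (∑ k, Z (j k)) ^ (2*q) = ∑ f : Fin (2*q) → Fin n, ∏ t, Z (j (f t)) := by
    intro j
    calc (∑ k, Z (j k)) ^ (2*q) = ∏ _t : Fin (2*q), ∑ k, Z (j k) := by
          rw [Finset.prod_const, Finset.card_univ, Fintype.card_fin]
      _ = ∑ f ∈ Fintype.piFinset (fun _ : Fin (2*q) => (Finset.univ : Finset (Fin n))),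
            ∏ t, Z (j (f t)) := Finset.prod_univ_sum _ _
      _ = ∑ f : Fin (2*q) → Fin n, ∏ t, Z (j (f t)) := by rw [Fintype.piFinset_univ]
  have fiber : ∀ (f : Fin (2*q) → Fin n) (j : Fin n → Fin N),
      ∏ t, Z (j (f t)) = ∏ k, Z (j k) ^ (e f k) := by
    intro f j
    rw [Finset.prod_comp (fun k => Z (j k)) f]
    simp only [he]
    apply Finset.prod_subset (Finset.subset_univ _)
    intro k _ hk
    have : (Finset.univ.filter (fun t => f t = k)).card = 0 := by
      simp only [Finset.card_eq_zero, Finset.filter_eq_empty_iff]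
      intro t _
      exact fun h => hk (by rw [← h]; exact Finset.mem_image_of_mem f (Finset.mem_univ t))
    rw [this, pow_zero]
  have key : ∀ f : Fin (2*q) → Fin n,
      ∑ j : Fin n → Fin N, (∏ k, w (j k)) * ∏ t, Z (j (f t)) = ∏ k, M (e f k) := by
    intro f
    have h1 : ∀ j : Fin n → Fin N,
        (∏ k, w (j k)) * ∏ t, Z (j (f t)) = ∏ k, (w (j k) * Z (j k) ^ (e f k)) := by
      intro j
      rw [fiber f j, Finset.prod_mul_distrib]
    simp only [h1]
    rw [← Fintype.piFinset_univ]
    exact (Finset.prod_univ_sum (fun _ : Fin n => (Finset.univ : Finset (Fin N)))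
      (fun k i => w i * Z i ^ e f k)).symm
  have hsum_e : ∀ f : Fin (2*q) → Fin n, ∑ k, e f k = 2*q := by
    intro f
    have := Finset.card_eq_sum_card_fiberwise
      (f := f) (s := Finset.univ) (t := Finset.univ) (fun x _ => Finset.mem_univ (f x))
    simpa [he] using this.symm
  have hMle : ∀ d : ℕ, |M d| ≤ B ^ d := by
    intro d
    calc |M d| ≤ ∑ i, |w i * Z i ^ d| := Finset.abs_sum_le_sum_abs _ _
      _ = ∑ i, w i * |Z i| ^ d := by
          apply Finset.sum_congr rfl; intro i _
          rw [abs_mul, abs_of_nonneg (hw0 i), abs_pow]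
      _ ≤ ∑ i, w i * B ^ d := by
          apply Finset.sum_le_sum; intro i _
          exact mul_le_mul_of_nonneg_left (pow_le_pow_left₀ (abs_nonneg _) (hZB i) d) (hw0 i)
      _ = B ^ d := by rw [← Finset.sum_mul, hw1, one_mul]
  have hM1 : M 1 = 0 := by simpa [hM] using hZ0
  set Gd := (Finset.univ.filter (fun f : Fin (2*q) → Fin n =>
        ∀ k, (Finset.univ.filter (fun t => f t = k)).card ≠ 1)) with hGd
  calc ∑ j : Fin n → Fin N, (∏ k, w (j k)) * (∑ k, Z (j k)) ^ (2*q)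
      = ∑ j : Fin n → Fin N, ∑ f : Fin (2*q) → Fin n, (∏ k, w (j k)) * ∏ t, Z (j (f t)) := by
        apply Finset.sum_congr rfl; intro j _
        rw [expand j, Finset.mul_sum]
    _ = ∑ f : Fin (2*q) → Fin n, ∑ j : Fin n → Fin N, (∏ k, w (j k)) * ∏ t, Z (j (f t)) :=
        Finset.sum_comm
    _ = ∑ f : Fin (2*q) → Fin n, ∏ k, M (e f k) := by
        apply Finset.sum_congr rfl; intro f _; exact key f
    _ = ∑ f ∈ Gd, ∏ k, M (e f k) := by
        symm
        apply Finset.sum_subset (Finset.filter_subset _ _)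
        intro f _ hf
        simp only [hGd, Finset.mem_filter, Finset.mem_univ, true_and, not_forall, not_not] at hf
        obtain ⟨k, hk⟩ := hf
        apply Finset.prod_eq_zero (Finset.mem_univ k)
        rw [show e f k = 1 from hk, hM1]
    _ ≤ ∑ f ∈ Gd, B^(2*q) := by
        apply Finset.sum_le_sum
        intro f _
        calc ∏ k, M (e f k) ≤ |∏ k, M (e f k)| := le_abs_self _
          _ = ∏ k, |M (e f k)| := by rw [Finset.abs_prod]
          _ ≤ ∏ k, B ^ (e f k) := Finset.prod_le_prod (fun k _ => abs_nonneg _)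
              (fun k _ => hMle _)
          _ = B ^ (∑ k, e f k) := by rw [Finset.prod_pow_eq_pow_sum]
          _ = B ^ (2*q) := by rw [hsum_e f]
    _ = (Gd.card : ℝ) * B^(2*q) := by rw [Finset.sum_const, nsmul_eq_mul]
    _ ≤ (Real.exp 1 * q * n)^q * B^(2*q) := by
        apply mul_le_mul_of_nonneg_right (count_good_maps q n hq) (by positivity)

set_option maxHeartbeats 1600000 in
/-- **Theorem 4.5.**  Let `{u_i}_{i=1}^N` be a real orthonormal system on a compact
`Ω ⊂ ℝ^d` (with probability measure `μ`) satisfying conditions B and C, let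
`g_i := K₂^{-1/2} u_i`, and for `t = Σ_i c_i g_i ∈ X_N` set `‖t‖_A := Σ_i |c_i|`.  Then for
every `t ∈ X_N` and every `m ≥ 1` there is an `m`-term polynomial `G_m(t) = Σ_{j∈Λ} a_j g_j`,
`|Λ| ≤ m`, with `‖t - G_m(t)‖_∞ ≤ C m^{-1/2} (ln N)^{1/2} ‖t‖_A` and `‖G_m(t)‖_A = ‖t‖_A`,
where `C = C(K₃,K₄)`. -/
theorem incremental_greedy_Linf (K₃ K₄ : ℝ) :
    ∃ C : ℝ, 0 < C ∧
      ∀ (d : ℕ) (Ω : Set (Fin d → ℝ)) (μ : Measure (Fin d → ℝ)),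
        IsProbabilityMeasure μ → IsCompact Ω → μ Ωᶜ = 0 →
        ∀ (N : ℕ) (K₂ : ℝ) (u : Fin N → (Fin d → ℝ) → ℝ),
          (∀ i, ContinuousOn (u i) Ω) →
          -- orthonormality
          (∀ i j, (∫ x, u i x * u j x ∂μ) = if i = j then (1 : ℝ) else 0) →
          -- condition B
          (∀ i, ∀ x ∈ Ω, (u i x) ^ 2 ≤ K₂) →
          -- condition C (Nikol'skii-type inequality)
          (∀ f ∈ Submodule.span ℝ (Set.range u), ∀ p : ℝ, 2 ≤ p →
            ∀ x ∈ Ω, |f x| ≤ K₃ * (N : ℝ) ^ (K₄ / p) * (∫ y, |f y| ^ p ∂μ) ^ (1 / p)) →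
          ∀ (c : Fin N → ℝ) (m : ℕ), 1 ≤ m →
            ∃ (Λ : Finset (Fin N)) (a : Fin N → ℝ),
              Λ.card ≤ m ∧
              (∀ x ∈ Ω,
                |(∑ i, c i * ((Real.sqrt K₂)⁻¹ * u i x)) -
                    ∑ j ∈ Λ, a j * ((Real.sqrt K₂)⁻¹ * u j x)| ≤
                  C * (Real.sqrt (m : ℝ))⁻¹ * Real.sqrt (Real.log N) * ∑ i, |c i|) ∧
              (∑ j ∈ Λ, |a j|) = ∑ i, |c i| := by
  classical
  refine ⟨10 * (max K₃ 1) * Real.exp |K₄|, by positivity, ?_⟩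
  intro d Ω μ hprob hcomp hnull N K₂ u hcont horth hCB hC c m hm
  have hRHSnn : (0:ℝ) ≤ 10 * (max K₃ 1) * Real.exp |K₄| * (Real.sqrt (m : ℝ))⁻¹ *
      Real.sqrt (Real.log N) * ∑ i, |c i| := by positivity
  by_cases hNm : N ≤ m
  · refine ⟨Finset.univ, c, by simpa using hNm, fun x hx => by simp [hRHSnn], rfl⟩
  · push_neg at hNm
    have hN2 : 2 ≤ N := by omega
    have hm0 : (0:ℝ) < m := by exact_mod_cast hm
    have hΩne : Ω.Nonempty := by
      by_contra h
      rw [Set.not_nonempty_iff_eq_empty] at h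
      rw [h, Set.compl_empty] at hnull
      simp [measure_univ] at hnull
    obtain ⟨x₀, hx₀⟩ := hΩne
    have hK2 : 0 ≤ K₂ := le_trans (sq_nonneg _) (hCB ⟨0, by omega⟩ x₀ hx₀)
    set S := ∑ i, |c i| with hS
    have hS0 : 0 ≤ S := Finset.sum_nonneg fun i _ => abs_nonneg _
    by_cases hSz : S = 0
    · refine ⟨∅, fun _ => 0, by simp, ?_, by simpa using hSz.symm⟩
      intro x hx
      have hc : ∀ i, c i = 0 := by
        intro i
        have := (Finset.sum_eq_zero_iff_of_nonneg
          (fun i (_ : i ∈ Finset.univ) => abs_nonneg (c i))).1 hSz i (Finset.mem_univ i)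
        exact abs_eq_zero.1 this
      simp [hc, hRHSnn]
    · have hSpos : 0 < S := lt_of_le_of_ne hS0 (Ne.symm hSz)
      set q := ⌈Real.log N⌉₊ with hqdef
      have hlogN : 0 < Real.log N := Real.log_pos (by exact_mod_cast hN2)
      have hq1 : 1 ≤ q := Nat.ceil_pos.2 hlogN
      have hlogq : Real.log N ≤ q := Nat.le_ceil _
      have hqlog : (q:ℝ) ≤ Real.log N + 1 := le_of_lt (Nat.ceil_lt_add_one hlogN.le)
      set g : Fin N → (Fin d → ℝ) → ℝ := fun i y => (Real.sqrt K₂)⁻¹ * u i y with hg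
      have hgle : ∀ i, ∀ x ∈ Ω, |g i x| ≤ 1 := by
        intro i x hx
        have h1 : |u i x| ≤ Real.sqrt K₂ := Real.abs_le_sqrt (hCB i x hx)
        calc |g i x| = (Real.sqrt K₂)⁻¹ * |u i x| := by
              rw [hg]; rw [abs_mul, abs_of_nonneg (by positivity)]
          _ ≤ (Real.sqrt K₂)⁻¹ * Real.sqrt K₂ := by
              apply mul_le_mul_of_nonneg_left h1 (by positivity)
          _ ≤ 1 := by
              rcases eq_or_ne (Real.sqrt K₂) 0 with h | h
              · simp [h]
              · rw [inv_mul_cancel₀ h]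
      set sg : ℝ → ℝ := fun r => if r < 0 then -1 else 1 with hsg
      have hsg_abs : ∀ r, |sg r| = 1 := by
        intro r; rw [hsg]; dsimp only; split_ifs <;> simp
      have hsg_mul : ∀ r, sg r * |r| = r := by
        intro r; rw [hsg]; dsimp only; split_ifs with h
        · simp [abs_of_neg h]
        · simp [abs_of_nonneg (not_lt.1 h)]
      set w : Fin N → ℝ := fun i => |c i| / S with hw
      have hw0 : ∀ i, 0 ≤ w i := fun i => by rw [hw]; positivity
      have hw1 : ∑ i, w i = 1 := by
        rw [hw]; dsimp only; rw [← Finset.sum_div, ← hS, div_self hSz]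
      set t : (Fin d → ℝ) → ℝ := fun y => ∑ i, c i * g i y with ht
      set F : (Fin m → Fin N) → (Fin d → ℝ) → ℝ :=
        fun j y => (t y - ∑ k, (S/m) * sg (c (j k)) * g (j k) y)^(2*q) with hF
      set X : ℝ := 2*S*Real.sqrt (Real.exp 1 * q) / Real.sqrt m with hX
      have hX0 : 0 ≤ X := by rw [hX]; positivity
      -- pointwise expectation bound
      have hkey : ∀ x ∈ Ω, ∑ j : Fin m → Fin N, (∏ k, w (j k)) * F j x ≤ X^(2*q) := by
        intro x hx
        set Zx : Fin N → ℝ := fun i => t x - S * sg (c i) * g i x with hZx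
        have htS : |t x| ≤ S := by
          rw [ht]; dsimp only
          calc |∑ i, c i * g i x| ≤ ∑ i, |c i * g i x| := Finset.abs_sum_le_sum_abs _ _
            _ ≤ ∑ i, |c i| := by
                apply Finset.sum_le_sum; intro i _
                rw [abs_mul]
                exact mul_le_of_le_one_right (abs_nonneg _) (hgle i x hx)
            _ = S := hS.symm
        have hZ0 : ∑ i, w i * Zx i = 0 := by
          have heach : ∀ i, w i * Zx i = w i * t x - c i * g i x := by
            intro i
            rw [hZx, hw]; dsimp only
            have h1 : |c i| / S * S = |c i| := div_mul_cancel₀ _ hSz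
            have h2 : |c i| * sg (c i) = c i := by rw [mul_comm]; exact hsg_mul (c i)
            calc |c i| / S * (t x - S * sg (c i) * g i x)
                = |c i| / S * t x - (|c i| / S * S) * (sg (c i) * g i x) := by ring
              _ = |c i| / S * t x - (|c i| * sg (c i)) * g i x := by rw [h1]; ring
              _ = |c i| / S * t x - c i * g i x := by rw [h2]
          rw [Finset.sum_congr rfl (fun i _ => heach i), Finset.sum_sub_distrib,
            ← Finset.sum_mul, hw1, one_mul]
          rw [ht]; dsimp only; ring
        have hZB : ∀ i, |Zx i| ≤ 2*S := by
          intro i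
          have h2 : |S * sg (c i) * g i x| ≤ S := by
            rw [abs_mul, abs_mul, abs_of_nonneg hS0, hsg_abs, mul_one]
            exact mul_le_of_le_one_right hS0 (hgle i x hx)
          calc |Zx i| ≤ |t x| + |S * sg (c i) * g i x| := by
                rw [hZx]; dsimp only; rw [sub_eq_add_neg]
                exact le_trans (abs_add_le _ _) (by rw [abs_neg])
            _ ≤ S + S := add_le_add htS h2
            _ = 2*S := by ring
        have hcore := core_moment (n := m) w Zx hw0 hZ0 hZB hw1 hq1
        have hFeq : ∀ j : Fin m → Fin N,
            F j x = ((m:ℝ)⁻¹)^(2*q) * (∑ k, Zx (j k))^(2*q) := by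
          intro j
          rw [hF]; dsimp only
          rw [← mul_pow]
          congr 1
          have heach : ∀ k : Fin m, (m:ℝ)⁻¹ * Zx (j k)
              = (m:ℝ)⁻¹ * t x - (S/m) * sg (c (j k)) * g (j k) x := by
            intro k; rw [hZx]; dsimp only; field_simp
            try ring
          rw [Finset.mul_sum, Finset.sum_congr rfl (fun k _ => heach k),
            Finset.sum_sub_distrib, Finset.sum_const, Finset.card_univ, Fintype.card_fin,
            nsmul_eq_mul]
          field_simp
        calc ∑ j : Fin m → Fin N, (∏ k, w (j k)) * F j x
            = ((m:ℝ)⁻¹)^(2*q) * ∑ j : Fin m → Fin N,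
                (∏ k, w (j k)) * (∑ k, Zx (j k))^(2*q) := by
              rw [Finset.mul_sum]
              apply Finset.sum_congr rfl; intro j _
              rw [hFeq j]; ring
          _ ≤ ((m:ℝ)⁻¹)^(2*q) * ((Real.exp 1 * q * m)^q * (2*S)^(2*q)) := by
              apply mul_le_mul_of_nonneg_left hcore (by positivity)
          _ = X^(2*q) := by
              have h1 : (Real.sqrt (Real.exp 1 * q))^(2*q) = (Real.exp 1 * q)^q := by
                rw [pow_mul, Real.sq_sqrt (by positivity)]
              have h2 : (Real.sqrt (m:ℝ))^(2*q) = (m:ℝ)^q := by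
                rw [pow_mul, Real.sq_sqrt (by positivity)]
              rw [hX, div_pow, mul_pow (2*S), h1, h2,
                mul_pow (Real.exp 1 * (q:ℝ)) ((m:ℝ))]
              have hmne : ((m:ℝ)) ≠ 0 := ne_of_gt hm0
              field_simp
              ring
              rw [← mul_pow, mul_inv_cancel₀ hmne, one_pow]
      -- total weight one
      have hW1 : ∑ j : Fin m → Fin N, ∏ k, w (j k) = 1 := by
        have h := Finset.prod_univ_sum (fun _ : Fin m => (Finset.univ : Finset (Fin N)))
          (fun _ i => w i)
        rw [Fintype.piFinset_univ] at h
        rw [← h, hw1, Finset.prod_const, one_pow]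
      have hWnn : ∀ j : Fin m → Fin N, 0 ≤ ∏ k, w (j k) :=
        fun j => Finset.prod_nonneg (fun k _ => hw0 _)
      have haemem : ∀ᵐ x ∂μ, x ∈ Ω := by
        rw [MeasureTheory.ae_iff]
        exact hnull
      -- choose a good sample j
      have hjex : ∃ j : Fin m → Fin N, ∫ y, F j y ∂μ ≤ X^(2*q) := by
        by_cases hint : ∀ j : Fin m → Fin N, Integrable (F j) μ
        · by_contra hcon
          push_neg at hcon
          have hex : ∃ j0 : Fin m → Fin N, 0 < ∏ k, w (j0 k) := by
            by_contra h
            push_neg at h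
            have : ∑ j : Fin m → Fin N, ∏ k, w (j k) = 0 :=
              Finset.sum_eq_zero (fun j _ => le_antisymm (h j) (hWnn j))
            rw [hW1] at this; norm_num at this
          obtain ⟨j0, hj0⟩ := hex
          have hstrict : ∑ j : Fin m → Fin N, (∏ k, w (j k)) * X^(2*q)
              < ∑ j : Fin m → Fin N, (∏ k, w (j k)) * ∫ y, F j y ∂μ :=
            Finset.sum_lt_sum
              (fun j _ => mul_le_mul_of_nonneg_left (hcon j).le (hWnn j))
              ⟨j0, Finset.mem_univ _, mul_lt_mul_of_pos_left (hcon j0) hj0⟩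
          rw [← Finset.sum_mul, hW1, one_mul] at hstrict
          have hswap : ∑ j : Fin m → Fin N, (∏ k, w (j k)) * ∫ y, F j y ∂μ
              = ∫ y, ∑ j : Fin m → Fin N, (∏ k, w (j k)) * F j y ∂μ := by
            rw [MeasureTheory.integral_finset_sum _
              (fun j _ => ((hint j).const_mul _))]
            apply Finset.sum_congr rfl
            intro j _
            exact (MeasureTheory.integral_const_mul _ _).symm
          have hle : ∫ y, ∑ j : Fin m → Fin N, (∏ k, w (j k)) * F j y ∂μ ≤ X^(2*q) := by
            calc ∫ y, ∑ j : Fin m → Fin N, (∏ k, w (j k)) * F j y ∂μ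
                ≤ ∫ _y, X^(2*q) ∂μ := by
                  apply MeasureTheory.integral_mono_ae
                    (MeasureTheory.integrable_finset_sum _
                      (fun j _ => ((hint j).const_mul _)))
                    (MeasureTheory.integrable_const _)
                  filter_upwards [haemem] with y hy
                  exact hkey y hy
              _ = X^(2*q) := by simp [measure_univ]
          rw [hswap] at hstrict
          linarith
        · push_neg at hint
          obtain ⟨j, hj⟩ := hint
          refine ⟨j, ?_⟩
          rw [MeasureTheory.integral_undef hj]
          positivity
      obtain ⟨j, hj⟩ := hjex
      -- build the m-term approximant
      set cnt : Fin N → ℕ := fun i => (Finset.univ.filter (fun k => j k = i)).card with hcnt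
      set a : Fin N → ℝ := fun i => (S/m) * cnt i * sg (c i) with ha
      set Λ : Finset (Fin N) := Finset.univ.image j with hΛ
      have hGf : ∀ y, ∑ i ∈ Λ, a i * g i y = ∑ k, (S/m) * sg (c (j k)) * g (j k) y := by
        intro y
        rw [Finset.sum_comp (fun i => (S/m) * sg (c i) * g i y) j]
        apply Finset.sum_congr rfl
        intro i _
        rw [ha]; dsimp only
        rw [nsmul_eq_mul, hcnt]; dsimp only
        ring
      refine ⟨Λ, a, le_trans Finset.card_image_le (by simp), ?_, ?_⟩
      · -- the main sup-norm bound
        set fd : (Fin d → ℝ) → ℝ :=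
          fun y => (∑ i, c i * g i y) - ∑ i ∈ Λ, a i * g i y with hfd
        have hfd_eq : fd = ∑ i : Fin N,
            (((c i - if i ∈ Λ then a i else 0) * (Real.sqrt K₂)⁻¹) • u i) := by
          funext y
          rw [Finset.sum_apply]
          simp only [Pi.smul_apply, smul_eq_mul]
          rw [hfd]; dsimp only
          have h1 : ∑ i ∈ Λ, a i * g i y
              = ∑ i : Fin N, (if i ∈ Λ then a i else 0) * g i y := by
            symm
            simp only [ite_mul, zero_mul]
            rw [Finset.sum_ite_mem, Finset.univ_inter]
          rw [h1, ← Finset.sum_sub_distrib]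
          apply Finset.sum_congr rfl
          intro i _
          rw [hg]; dsimp only; ring
        have hfd_span : fd ∈ Submodule.span ℝ (Set.range u) := by
          rw [hfd_eq]
          exact Submodule.sum_mem _
            (fun i _ => Submodule.smul_mem _ _ (Submodule.subset_span ⟨i, rfl⟩))
        have hqR : (1:ℝ) ≤ (q:ℝ) := by exact_mod_cast hq1
        have h2q : (2:ℝ) ≤ ((2*q : ℕ) : ℝ) := by push_cast; linarith
        have hppos : (0:ℝ) < ((2*q : ℕ) : ℝ) := by linarith
        have hpne : ((2*q : ℕ) : ℝ) ≠ 0 := ne_of_gt hppos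
        have heven : Even (2*q) := ⟨q, by ring⟩
        have hint_eq : (fun y => |fd y| ^ (((2*q : ℕ) : ℝ))) = fun y => F j y := by
          funext y
          rw [Real.rpow_natCast, Even.pow_abs heven]
          show (fd y)^(2*q) = (t y - ∑ k, (S/m) * sg (c (j k)) * g (j k) y)^(2*q)
          rw [← hGf y]
        have hIeq : ∫ y, |fd y| ^ (((2*q : ℕ) : ℝ)) ∂μ = ∫ y, F j y ∂μ := by
          rw [hint_eq]
        have hInn : 0 ≤ ∫ y, F j y ∂μ := by
          apply MeasureTheory.integral_nonneg
          intro y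
          rw [hF]; dsimp only
          exact Even.pow_nonneg heven _
        have hrle : (∫ y, |fd y| ^ (((2*q : ℕ) : ℝ)) ∂μ) ^ (1/((2*q : ℕ) : ℝ)) ≤ X := by
          rw [hIeq]
          have h1 : (∫ y, F j y ∂μ) ^ (1/((2*q : ℕ) : ℝ))
              ≤ (X^(2*q)) ^ (1/((2*q : ℕ) : ℝ)) :=
            Real.rpow_le_rpow hInn hj (by positivity)
          have h2 : (X^(2*q)) ^ (1/((2*q : ℕ) : ℝ)) = X := by
            rw [← Real.rpow_natCast X (2*q), ← Real.rpow_mul hX0, mul_one_div,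
              div_self hpne, Real.rpow_one]
          rw [h2] at h1
          exact h1
        intro x hx
        have hCb := hC fd hfd_span ((2*q : ℕ) : ℝ) h2q x hx
        have hNpowpos : (0:ℝ) ≤ (N:ℝ) ^ (K₄ / ((2*q : ℕ) : ℝ)) :=
          Real.rpow_nonneg (Nat.cast_nonneg N) _
        show |fd x| ≤ 10 * (max K₃ 1) * Real.exp |K₄| *
            (Real.sqrt (m : ℝ))⁻¹ * Real.sqrt (Real.log N) * S
        by_cases hK3 : K₃ ≤ 0
        · refine le_trans hCb (le_trans ?_ hRHSnn)
          have h₁ : K₃ * (N:ℝ) ^ (K₄ / ((2*q : ℕ) : ℝ)) ≤ 0 :=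
            mul_nonpos_iff.2 (Or.inr ⟨hK3, hNpowpos⟩)
          have h₂ : (0:ℝ) ≤ (∫ y, |fd y| ^ (((2*q : ℕ) : ℝ)) ∂μ) ^ (1/((2*q : ℕ) : ℝ)) := by
            apply Real.rpow_nonneg
            apply MeasureTheory.integral_nonneg
            intro y
            positivity
          exact mul_nonpos_iff.2 (Or.inr ⟨h₁, h₂⟩)
        · push_neg at hK3
          have hstep1 : (N:ℝ) ^ (K₄ / ((2*q : ℕ) : ℝ)) ≤ Real.exp |K₄| := by
            have hNpos : (0:ℝ) < (N:ℝ) := by exact_mod_cast (by omega : 0 < N)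
            rw [Real.rpow_def_of_pos hNpos]
            apply Real.exp_le_exp.2
            have hp2 : Real.log N ≤ ((2*q : ℕ) : ℝ) := by push_cast; linarith
            calc Real.log N * (K₄ / ((2*q : ℕ) : ℝ))
                ≤ |Real.log N * (K₄ / ((2*q : ℕ) : ℝ))| := le_abs_self _
              _ = (Real.log N / ((2*q : ℕ) : ℝ)) * |K₄| := by
                  rw [abs_mul, abs_div, abs_of_nonneg hlogN.le, abs_of_pos hppos]
                  ring
              _ ≤ 1 * |K₄| := by
                  apply mul_le_mul_of_nonneg_right _ (abs_nonneg _)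
                  rw [div_le_one hppos]
                  exact hp2
              _ = |K₄| := one_mul _
          have hstep2 : 2 * Real.sqrt (Real.exp 1 * q) ≤ 10 * Real.sqrt (Real.log N) := by
            have he : Real.exp 1 < 2.7182818286 := Real.exp_one_lt_d9
            have hl2 : (0.6931471803 : ℝ) < Real.log 2 := Real.log_two_gt_d9
            have hlog2N : Real.log 2 ≤ Real.log N :=
              Real.log_le_log (by norm_num) (by exact_mod_cast hN2)
            have hq0 : (0:ℝ) ≤ (q:ℝ) := Nat.cast_nonneg q
            have hkey2 : 4 * (Real.exp 1 * q) ≤ 100 * Real.log N := by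
              nlinarith [mul_le_mul he.le hqlog hq0
                (by norm_num : (0:ℝ) ≤ 2.7182818286)]
            calc 2 * Real.sqrt (Real.exp 1 * q)
                = Real.sqrt (4 * (Real.exp 1 * q)) := by
                  rw [show (4:ℝ) * (Real.exp 1 * q) = (2:ℝ)^2 * (Real.exp 1 * q) by norm_num,
                    Real.sqrt_mul (by norm_num : (0:ℝ) ≤ (2:ℝ)^2) (Real.exp 1 * q),
                    Real.sqrt_sq (by norm_num : (0:ℝ) ≤ (2:ℝ))]
              _ ≤ Real.sqrt (100 * Real.log N) := Real.sqrt_le_sqrt hkey2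
              _ = 10 * Real.sqrt (Real.log N) := by
                  rw [show (100:ℝ) * Real.log N = (10:ℝ)^2 * Real.log N by norm_num,
                    Real.sqrt_mul (by norm_num : (0:ℝ) ≤ (10:ℝ)^2) (Real.log N),
                    Real.sqrt_sq (by norm_num : (0:ℝ) ≤ (10:ℝ))]
          have hsqm : (0:ℝ) < Real.sqrt m := Real.sqrt_pos.2 hm0
          have hXle : X ≤ (10 * Real.sqrt (Real.log N) * S) / Real.sqrt m := by
            rw [hX]
            have hnum : 2*S*Real.sqrt (Real.exp 1 * q)
                ≤ 10 * Real.sqrt (Real.log N) * S := by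
              calc 2*S*Real.sqrt (Real.exp 1 * q)
                  = (2*Real.sqrt (Real.exp 1 * q))*S := by ring
                _ ≤ (10*Real.sqrt (Real.log N))*S :=
                    mul_le_mul_of_nonneg_right hstep2 hS0
                _ = 10 * Real.sqrt (Real.log N) * S := by ring
            exact (div_le_div_iff_of_pos_right hsqm).2 hnum
          calc |fd x| ≤ K₃ * (N:ℝ) ^ (K₄ / ((2*q:ℕ):ℝ)) *
              (∫ y, |fd y| ^ (((2*q:ℕ):ℝ)) ∂μ) ^ (1/((2*q:ℕ):ℝ)) := hCb
            _ ≤ K₃ * (N:ℝ) ^ (K₄ / ((2*q:ℕ):ℝ)) * X :=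
                mul_le_mul_of_nonneg_left hrle (mul_nonneg hK3.le hNpowpos)
            _ ≤ ((max K₃ 1) * Real.exp |K₄|) * X := by
                apply mul_le_mul_of_nonneg_right _ hX0
                exact mul_le_mul (le_max_left _ _) hstep1 hNpowpos (by positivity)
            _ ≤ ((max K₃ 1) * Real.exp |K₄|) *
                ((10 * Real.sqrt (Real.log N) * S) / Real.sqrt m) := by
                apply mul_le_mul_of_nonneg_left hXle (by positivity)
            _ = 10 * (max K₃ 1) * Real.exp |K₄| * (Real.sqrt (m:ℝ))⁻¹ *
                Real.sqrt (Real.log N) * S := by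
                rw [div_eq_mul_inv]; ring
      · -- equal A-norms
        have hfib : (Finset.univ : Finset (Fin m)).card = ∑ i ∈ Λ, cnt i := by
          rw [hΛ, hcnt]
          exact Finset.card_eq_sum_card_fiberwise
            (fun k _ => Finset.mem_image_of_mem j (Finset.mem_univ k))
        have hfibR : ∑ i ∈ Λ, (cnt i : ℝ) = (m:ℝ) := by
          rw [← Nat.cast_sum, ← hfib, Finset.card_univ, Fintype.card_fin]
        calc ∑ i ∈ Λ, |a i| = ∑ i ∈ Λ, (S/m) * (cnt i : ℝ) := by
              apply Finset.sum_congr rfl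
              intro i _
              rw [ha]; dsimp only
              rw [abs_mul, hsg_abs, mul_one,
                abs_of_nonneg (mul_nonneg (div_nonneg hS0 hm0.le) (Nat.cast_nonneg _))]
          _ = (S/m) * ∑ i ∈ Λ, (cnt i : ℝ) := by rw [Finset.mul_sum]
          _ = (S/m) * m := by rw [hfibR]
          _ = S := div_mul_cancel₀ S (ne_of_gt hm0)
end

section
/- Let {u_i}_{i=1}^N be a real orthonormal system on Ω satisfying condition E, i.e. Σ_{i=1}^N u_i(x)² ≤ N t² for every x ∈ Ω, for some constant t. Then there exists a set of m ≤ C(t) N² points ξ¹,…,ξ^m ∈ Ω such that for every f = Σ_{i=1}^N c_i u_i one has (1/2)‖f‖₂² ≤ (1/m) Σ_{j=1}^m f(ξ^j)² ≤ (3/2)‖f‖₂². -/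
open MeasureTheory Real

open Finset RealInnerProductSpace in
lemma exists_le_weighted_sum {ι : Type*} (s : Finset ι) (w f : ι → ℝ)
    (hw : ∀ i ∈ s, 0 ≤ w i) (hw1 : ∑ i ∈ s, w i = 1) :
    ∃ i ∈ s, f i ≤ ∑ i ∈ s, w i * f i := by
  by_contra h
  push_neg at h
  have hex : ∃ i ∈ s, 0 < w i := by
    by_contra h2
    push_neg at h2
    have : ∑ i ∈ s, w i = 0 :=
      Finset.sum_eq_zero fun i hi => le_antisymm (h2 i hi) (hw i hi)
    rw [this] at hw1; norm_num at hw1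
  obtain ⟨i0, hi0, hwi0⟩ := hex
  have hlt : ∑ i ∈ s, w i * (∑ j ∈ s, w j * f j) < ∑ i ∈ s, w i * f i := by
    apply Finset.sum_lt_sum
    · intro i hi
      exact mul_le_mul_of_nonneg_left (le_of_lt (h i hi)) (hw i hi)
    · exact ⟨i0, hi0, (mul_lt_mul_iff_right₀ hwi0).mpr (h i0 hi0)⟩
  rw [← Finset.sum_mul, hw1, one_mul] at hlt
  exact lt_irrefl _ hlt

open Finset RealInnerProductSpace in
lemma approx_carath {H : Type*} [NormedAddCommGroup H] [InnerProductSpace ℝ H]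
    {ι : Type*} (s : Finset ι) (w : ι → ℝ) (z : ι → H) (p : H) (R : ℝ)
    (hw0 : ∀ i ∈ s, 0 ≤ w i) (hw1 : ∑ i ∈ s, w i = 1)
    (hp : ∑ i ∈ s, w i • z i = p) (hR : ∀ i ∈ s, ‖z i - p‖ ≤ R) :
    ∀ m : ℕ, ∃ g : Fin m → ι, (∀ j, g j ∈ s) ∧
      ‖(∑ j, z (g j)) - (m : ℝ) • p‖ ^ 2 ≤ m * R ^ 2 := by
  have hsum0 : ∑ i ∈ s, w i • (z i - p) = 0 := by
    simp only [smul_sub]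
    rw [Finset.sum_sub_distrib, hp, ← Finset.sum_smul, hw1, one_smul, sub_self]
  intro m
  induction m with
  | zero => exact ⟨Fin.elim0, fun j => j.elim0, by simp⟩
  | succ m ih =>
    obtain ⟨g, hgs, hg⟩ := ih
    set q := ∑ j, z (g j) with hq
    set e := q - (m : ℝ) • p with he
    have h1 : ∑ i ∈ s, w i * ‖e‖ ^ 2 = ‖e‖ ^ 2 := by
      rw [← Finset.sum_mul, hw1, one_mul]
    have h2 : ∑ i ∈ s, w i * (2 * ⟪e, z i - p⟫) = 0 := by
      have heq : ∑ i ∈ s, w i * (2 * ⟪e, z i - p⟫)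
          = 2 * ⟪e, ∑ i ∈ s, w i • (z i - p)⟫ := by
        rw [inner_sum, Finset.mul_sum]
        refine Finset.sum_congr rfl fun i hi => ?_
        rw [real_inner_smul_right]; ring
      rw [heq, hsum0, inner_zero_right, mul_zero]
    have h3 : ∑ i ∈ s, w i * ‖z i - p‖ ^ 2 ≤ R ^ 2 := by
      calc ∑ i ∈ s, w i * ‖z i - p‖ ^ 2 ≤ ∑ i ∈ s, w i * R ^ 2 :=
            Finset.sum_le_sum fun i hi =>
              mul_le_mul_of_nonneg_left
                (pow_le_pow_left₀ (norm_nonneg _) (hR i hi) 2) (hw0 i hi)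
        _ = R ^ 2 := by rw [← Finset.sum_mul, hw1, one_mul]
    have key : ∑ i ∈ s, w i * ‖e + (z i - p)‖ ^ 2 ≤ (m + 1 : ℝ) * R ^ 2 := by
      have hsplit : ∑ i ∈ s, w i * ‖e + (z i - p)‖ ^ 2
          = ∑ i ∈ s, w i * ‖e‖ ^ 2 + ∑ i ∈ s, w i * (2 * ⟪e, z i - p⟫)
            + ∑ i ∈ s, w i * ‖z i - p‖ ^ 2 := by
        rw [← Finset.sum_add_distrib, ← Finset.sum_add_distrib]
        exact Finset.sum_congr rfl fun i hi => by rw [norm_add_sq_real]; ring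
      rw [hsplit, h1, h2]
      have : ‖e‖ ^ 2 ≤ (m : ℝ) * R ^ 2 := hg
      linarith
    obtain ⟨i, his, hFi⟩ :=
      exists_le_weighted_sum s w (fun i => ‖e + (z i - p)‖ ^ 2) hw0 hw1
    set g' : Fin (m + 1) → ι := Fin.snoc g i with hg'
    refine ⟨g', ?_, ?_⟩
    · intro j
      refine Fin.lastCases ?_ ?_ j
      · simpa [hg'] using his
      · intro k; simpa [hg'] using hgs k
    · have hsum : ∑ j : Fin (m + 1), z (g' j) = q + z i := by
        rw [Fin.sum_univ_castSucc]
        simp [hg', hq]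
      have harr : q + z i - ((m : ℝ) + 1) • p = e + (z i - p) := by
        rw [he, add_smul, one_smul]; abel
      rw [hsum]
      push_cast
      rw [harr]
      calc ‖e + (z i - p)‖ ^ 2 ≤ ∑ i ∈ s, w i * ‖e + (z i - p)‖ ^ 2 := hFi
        _ ≤ ((m : ℝ) + 1) * R ^ 2 := key

open MeasureTheory Real RealInnerProductSpace

set_option maxHeartbeats 1000000

lemma pilp_sum_apply {κ ι : Type*} [Fintype ι] (s : Finset κ)
    (v : κ → EuclideanSpace ℝ ι) (p : ι) : (∑ j ∈ s, v j) p = ∑ j ∈ s, v j p := by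
  induction s using Finset.cons_induction with
  | empty => rfl
  | cons i s hi ih => rw [Finset.sum_cons, Finset.sum_cons, PiLp.add_apply, ih]

/-- **Proposition 5.1.**  Let `{u_i}_{i=1}^N` be a real orthonormal system on a compact
`Ω ⊂ ℝ^d` (with probability measure `μ`) satisfying condition E: `Σ_i u_i(x)² ≤ N t²` for
all `x ∈ Ω`.  Then there is a set of `m ≤ C(t) N²` points `ξ¹,…,ξ^m ∈ Ω` such that for
every `f = Σ_i c_i u_i` one has `(1/2)‖f‖₂² ≤ (1/m) Σ_j f(ξ^j)² ≤ (3/2)‖f‖₂²`. -/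
theorem marcinkiewicz_L2_Nsq (t : ℝ) :
    ∃ C : ℝ, 0 < C ∧
      ∀ (d : ℕ) (Ω : Set (Fin d → ℝ)) (μ : Measure (Fin d → ℝ)),
        IsProbabilityMeasure μ → IsCompact Ω → μ Ωᶜ = 0 →
        ∀ (N : ℕ) (u : Fin N → (Fin d → ℝ) → ℝ),
          (∀ i, ContinuousOn (u i) Ω) →
          -- orthonormality
          (∀ i j, (∫ x, u i x * u j x ∂μ) = if i = j then (1 : ℝ) else 0) →
          -- condition E
          (∀ x ∈ Ω, (∑ i, (u i x) ^ 2) ≤ (N : ℝ) * t ^ 2) →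
          ∃ (m : ℕ) (ξ : Fin m → Fin d → ℝ),
            (∀ j, ξ j ∈ Ω) ∧
            (m : ℝ) ≤ C * (N : ℝ) ^ 2 ∧
            ∀ c : Fin N → ℝ,
              (1 / 2) * (∫ x, (∑ i, c i * u i x) ^ 2 ∂μ) ≤
                  (1 / (m : ℝ)) * ∑ j, (∑ i, c i * u i (ξ j)) ^ 2 ∧
              (1 / (m : ℝ)) * ∑ j, (∑ i, c i * u i (ξ j)) ^ 2 ≤
                  (3 / 2) * (∫ x, (∑ i, c i * u i x) ^ 2 ∂μ) := by
  refine ⟨64 * t ^ 4 + 2, by positivity, ?_⟩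
  intro d Ω μ hprob hcomp hΩc N u hu horth hE
  haveI := hprob
  rcases Nat.eq_zero_or_pos N with hN0 | hN1
  · subst hN0
    refine ⟨0, Fin.elim0, fun j => j.elim0, by simp, fun c => ?_⟩
    simp
  have hae : ∀ᵐ x ∂μ, x ∈ Ω := by
    rw [ae_iff]
    exact hΩc
  have hΩmeas : MeasurableSet Ω := hcomp.isClosed.measurableSet
  have hrestrict : μ.restrict Ω = μ := Measure.restrict_eq_self_of_ae_mem hae
  have huae : ∀ i, AEMeasurable (u i) μ := fun i => by
    have h1 : AEMeasurable (u i) (μ.restrict Ω) := (hu i).aemeasurable hΩmeas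
    rwa [hrestrict] at h1
  have hNt0 : (0 : ℝ) ≤ (N : ℝ) * t ^ 2 := by positivity
  have husq : ∀ (i : Fin N), ∀ x ∈ Ω, u i x ^ 2 ≤ (N : ℝ) * t ^ 2 := fun i x hx =>
    le_trans (Finset.single_le_sum (f := fun i => u i x ^ 2)
      (fun i _ => sq_nonneg _) (Finset.mem_univ i)) (hE x hx)
  have hbound : ∀ i j : Fin N, ∀ᵐ x ∂μ, ‖u i x * u j x‖ ≤ (N : ℝ) * t ^ 2 := by
    intro i j
    filter_upwards [hae] with x hx
    have h1 := husq i x hx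
    have h2 := husq j x hx
    rw [Real.norm_eq_abs, abs_mul]
    nlinarith [sq_nonneg (|u i x| - |u j x|), sq_abs (u i x), sq_abs (u j x)]
  have hint : ∀ i j : Fin N, Integrable (fun x => u i x * u j x) μ := fun i j =>
    Integrable.mono' (integrable_const _)
      ((huae i).mul (huae j)).aestronglyMeasurable (hbound i j)
  set M : (Fin d → ℝ) → EuclideanSpace ℝ (Fin N × Fin N) :=
    fun x => (WithLp.equiv 2 _).symm (fun p => u p.1 x * u p.2 x) with hMdef
  have hMapp : ∀ x p, M x p = u p.1 x * u p.2 x := fun x p => rfl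
  have hMrepr : ∀ x, M x =
      ∑ p : Fin N × Fin N, (u p.1 x * u p.2 x) • EuclideanSpace.single p (1 : ℝ) := by
    intro x
    ext q
    rw [pilp_sum_apply]
    simp only [PiLp.smul_apply, EuclideanSpace.single_apply, smul_eq_mul, mul_ite,
      mul_one, mul_zero, hMapp]
    rw [Finset.sum_ite_eq Finset.univ q (fun p => u p.1 x * u p.2 x)]
    simp
  have hMaesm : AEStronglyMeasurable M μ := by
    rw [funext hMrepr]
    exact Finset.aestronglyMeasurable_fun_sum _ fun (p : Fin N × Fin N) _ =>
      (((huae p.1).mul (huae p.2)).aestronglyMeasurable).smul_const (EuclideanSpace.single p (1 : ℝ))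
  have hMnorm : ∀ x ∈ Ω, ‖M x‖ ≤ (N : ℝ) * t ^ 2 := by
    intro x hx
    rw [EuclideanSpace.norm_eq]
    have hcalc : ∑ p : Fin N × Fin N, ‖M x p‖ ^ 2 = (∑ i, u i x ^ 2) ^ 2 := by
      simp only [hMapp, Real.norm_eq_abs, sq_abs]
      rw [Fintype.sum_prod_type, sq (∑ i, u i x ^ 2), Finset.sum_mul_sum]
      exact Finset.sum_congr rfl fun i _ => Finset.sum_congr rfl fun j _ => (mul_pow _ _ 2)
    rw [hcalc]
    have h0 : (0 : ℝ) ≤ ∑ i, u i x ^ 2 := Finset.sum_nonneg fun i _ => sq_nonneg _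
    calc Real.sqrt ((∑ i, u i x ^ 2) ^ 2) = |∑ i, u i x ^ 2| := Real.sqrt_sq_eq_abs _
      _ = ∑ i, u i x ^ 2 := abs_of_nonneg h0
      _ ≤ _ := hE x hx
  have hMint : Integrable M μ := by
    refine Integrable.mono' (integrable_const ((N : ℝ) * t ^ 2)) hMaesm ?_
    filter_upwards [hae] with x hx using hMnorm x hx
  set Imat : EuclideanSpace ℝ (Fin N × Fin N) :=
    (WithLp.equiv 2 _).symm (fun p => if p.1 = p.2 then (1 : ℝ) else 0) with hImatdef
  have hImatapp : ∀ p : Fin N × Fin N, Imat p = if p.1 = p.2 then (1 : ℝ) else 0 :=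
    fun p => rfl
  have hI : ∫ x, M x ∂μ = Imat := by
    ext q
    have hproj := (EuclideanSpace.proj (𝕜 := ℝ) q).integral_comp_comm hMint
    have hlhs : (EuclideanSpace.proj (𝕜 := ℝ) q) (∫ x, M x ∂μ) = (∫ x, M x ∂μ) q := rfl
    have hrhs : ∀ x, (EuclideanSpace.proj (𝕜 := ℝ) q) (M x) = u q.1 x * u q.2 x := fun x => rfl
    rw [hlhs] at hproj
    rw [← hproj]
    simp_rw [hrhs]
    rw [horth q.1 q.2, hImatapp]
  have hImem : Imat ∈ closure (convexHull ℝ (M '' Ω)) := by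
    rw [← hI]
    refine Convex.integral_mem ((convex_convexHull ℝ _).closure) isClosed_closure ?_ hMint
    filter_upwards [hae] with x hx
    exact subset_closure (subset_convexHull ℝ _ (Set.mem_image_of_mem M hx))
  obtain ⟨P, hPhull, hPdist⟩ : ∃ P ∈ convexHull ℝ (M '' Ω), ‖P - Imat‖ ≤ 1 / 4 := by
    rcases Metric.mem_closure_iff.mp hImem (1 / 4) (by norm_num) with ⟨P, hP1, hP2⟩
    refine ⟨P, hP1, ?_⟩
    rw [← dist_eq_norm, dist_comm]
    exact le_of_lt hP2
  have hhullnorm : ∀ y ∈ convexHull ℝ (M '' Ω), ‖y‖ ≤ (N : ℝ) * t ^ 2 := by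
    intro y hy
    have hsub : convexHull ℝ (M '' Ω) ⊆ Metric.closedBall 0 ((N : ℝ) * t ^ 2) := by
      apply convexHull_min ?_ (convex_closedBall _ _)
      rintro _ ⟨x, hx, rfl⟩
      simpa [Metric.mem_closedBall, dist_zero_right] using hMnorm x hx
    simpa [Metric.mem_closedBall, dist_zero_right] using hsub hy
  have hPnorm : ‖P‖ ≤ (N : ℝ) * t ^ 2 := hhullnorm P hPhull
  rw [convexHull_eq] at hPhull
  obtain ⟨ι, tset, w, z, hw0, hw1, hz, hcm⟩ := hPhull
  have hcm' : ∑ i ∈ tset, w i • z i = P := by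
    rw [← hcm, Finset.centerMass, hw1, inv_one, one_smul]
  set R : ℝ := 2 * ((N : ℝ) * t ^ 2) with hRdef
  have hzR : ∀ i ∈ tset, ‖z i - P‖ ≤ R := by
    intro i hi
    have h1 : ‖z i‖ ≤ (N : ℝ) * t ^ 2 :=
      hhullnorm _ (subset_convexHull ℝ _ (hz i hi))
    calc ‖z i - P‖ ≤ ‖z i‖ + ‖P‖ := norm_sub_le _ _
      _ ≤ R := by rw [hRdef]; linarith
  set m : ℕ := ⌈(64 : ℝ) * (N : ℝ) ^ 2 * t ^ 4⌉₊ + 1 with hmdef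
  have hm0 : 0 < m := Nat.succ_pos _
  have hmpos : (0 : ℝ) < (m : ℝ) := by exact_mod_cast hm0
  have hmlow : (64 : ℝ) * (N : ℝ) ^ 2 * t ^ 4 ≤ (m : ℝ) := by
    have h := Nat.le_ceil ((64 : ℝ) * (N : ℝ) ^ 2 * t ^ 4)
    have : (m : ℝ) = (⌈(64 : ℝ) * (N : ℝ) ^ 2 * t ^ 4⌉₊ : ℝ) + 1 := by
      rw [hmdef]; push_cast; ring
    rw [this]; linarith
  have hN1' : (1 : ℝ) ≤ (N : ℝ) := by exact_mod_cast hN1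
  have hmhigh : (m : ℝ) ≤ (64 * t ^ 4 + 2) * (N : ℝ) ^ 2 := by
    have h1 : (⌈(64 : ℝ) * (N : ℝ) ^ 2 * t ^ 4⌉₊ : ℝ) < 64 * (N : ℝ) ^ 2 * t ^ 4 + 1 :=
      Nat.ceil_lt_add_one (by positivity)
    have h2 : (1 : ℝ) ≤ (N : ℝ) ^ 2 := by nlinarith
    have : (m : ℝ) = (⌈(64 : ℝ) * (N : ℝ) ^ 2 * t ^ 4⌉₊ : ℝ) + 1 := by
      rw [hmdef]; push_cast; ring
    rw [this]; nlinarith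
  obtain ⟨g, hgs, hgbound⟩ := approx_carath tset w z P R hw0 hw1 hcm' hzR m
  choose ξ hξΩ hξM using fun j : Fin m => hz _ (hgs j)
  set A : EuclideanSpace ℝ (Fin N × Fin N) := (1 / (m : ℝ)) • ∑ j, M (ξ j) with hAdef
  have hAP : ‖A - P‖ ≤ 1 / 4 := by
    have hsum : ∑ j, M (ξ j) = ∑ j, z (g j) := Finset.sum_congr rfl fun j _ => hξM j
    have harr : A - P = (1 / (m : ℝ)) • ((∑ j, z (g j)) - (m : ℝ) • P) := by
      rw [hAdef, hsum, smul_sub, smul_smul]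
      congr 2
      rw [one_div, inv_mul_cancel₀ (ne_of_gt hmpos), one_smul]
    have hR2 : R ^ 2 = 4 * ((N : ℝ) ^ 2 * t ^ 4) := by rw [hRdef]; ring
    have h16 : 16 * R ^ 2 ≤ (m : ℝ) := by rw [hR2]; linarith
    have hnormle : ‖(∑ j, z (g j)) - (m : ℝ) • P‖ ≤ (m : ℝ) / 4 := by
      have hsq : ‖(∑ j, z (g j)) - (m : ℝ) • P‖ ^ 2 ≤ ((m : ℝ) / 4) ^ 2 := by
        calc ‖(∑ j, z (g j)) - (m : ℝ) • P‖ ^ 2 ≤ (m : ℝ) * R ^ 2 := hgbound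
          _ ≤ ((m : ℝ) / 4) ^ 2 := by nlinarith
      nlinarith [norm_nonneg ((∑ j, z (g j)) - (m : ℝ) • P), hmpos]
    rw [harr, norm_smul, Real.norm_eq_abs, abs_of_pos (by positivity : (0 : ℝ) < 1 / (m : ℝ))]
    calc 1 / (m : ℝ) * ‖(∑ j, z (g j)) - (m : ℝ) • P‖ ≤ 1 / (m : ℝ) * ((m : ℝ) / 4) :=
          mul_le_mul_of_nonneg_left hnormle (by positivity)
      _ = 1 / 4 := by field_simp
  have hAI : ‖A - Imat‖ ≤ 1 / 2 := by
    have : A - Imat = (A - P) + (P - Imat) := by abel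
    rw [this]
    calc ‖(A - P) + (P - Imat)‖ ≤ ‖A - P‖ + ‖P - Imat‖ := norm_add_le _ _
      _ ≤ 1 / 2 := by linarith
  refine ⟨m, ξ, hξΩ, hmhigh, fun c => ?_⟩
  set cc : EuclideanSpace ℝ (Fin N × Fin N) :=
    (WithLp.equiv 2 _).symm (fun p => c p.1 * c p.2) with hccdef
  have hccapp : ∀ p : Fin N × Fin N, cc p = c p.1 * c p.2 := fun p => rfl
  set S2 : ℝ := ∑ i, (c i) ^ 2 with hS2def
  have hS2nn : 0 ≤ S2 := Finset.sum_nonneg fun i _ => sq_nonneg _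
  have hccnorm : ‖cc‖ = S2 := by
    rw [EuclideanSpace.norm_eq]
    have hcalc : ∑ p : Fin N × Fin N, ‖cc p‖ ^ 2 = S2 ^ 2 := by
      simp only [hccapp, Real.norm_eq_abs, sq_abs]
      rw [Fintype.sum_prod_type, hS2def, sq (∑ i, c i ^ 2), Finset.sum_mul_sum]
      exact Finset.sum_congr rfl fun i _ => Finset.sum_congr rfl fun j _ => (mul_pow _ _ 2)
    rw [hcalc, Real.sqrt_sq hS2nn]
  have hintf : ∫ x, (∑ i, c i * u i x) ^ 2 ∂μ = S2 := by
    have hexp : ∀ x, (∑ i, c i * u i x) ^ 2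
        = ∑ i, ∑ j, (c i * c j) * (u i x * u j x) := by
      intro x
      rw [sq, Finset.sum_mul_sum]
      exact Finset.sum_congr rfl fun i _ => Finset.sum_congr rfl fun j _ => by ring
    calc ∫ x, (∑ i, c i * u i x) ^ 2 ∂μ
        = ∫ x, ∑ i, ∑ j, (c i * c j) * (u i x * u j x) ∂μ := by simp_rw [hexp]
      _ = ∑ i, ∑ j, ∫ x, (c i * c j) * (u i x * u j x) ∂μ := by
          rw [integral_finset_sum _ fun i _ =>
            integrable_finset_sum _ fun j _ => (hint i j).const_mul _]
          exact Finset.sum_congr rfl fun i _ =>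
            integral_finset_sum _ fun j _ => (hint i j).const_mul _
      _ = ∑ i, ∑ j, (c i * c j) * (if i = j then (1 : ℝ) else 0) := by
          refine Finset.sum_congr rfl fun i _ => Finset.sum_congr rfl fun j _ => ?_
          rw [integral_const_mul, horth i j]
      _ = S2 := by
          simp [mul_ite, Finset.sum_ite_eq', sq, hS2def]
  have hinner : ∀ y : EuclideanSpace ℝ (Fin N × Fin N),
      ⟪y, cc⟫ = ∑ p : Fin N × Fin N, y p * (c p.1 * c p.2) := by
    intro y
    simp [PiLp.inner_apply, RCLike.inner_apply, hccapp]
    exact Finset.sum_congr rfl fun _ _ => mul_comm _ _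
  have hIinner : ⟪Imat, cc⟫ = S2 := by
    rw [hinner]
    simp_rw [hImatapp]
    rw [Fintype.sum_prod_type]
    simp [ite_mul, Finset.sum_ite_eq, sq, hS2def]
  have hsqid : ∀ x, (∑ i, c i * u i x) ^ 2
      = ∑ p : Fin N × Fin N, (u p.1 x * u p.2 x) * (c p.1 * c p.2) := by
    intro x
    rw [sq, Finset.sum_mul_sum, Fintype.sum_prod_type]
    exact Finset.sum_congr rfl fun i _ => Finset.sum_congr rfl fun k _ => by ring
  have hApp : ∀ p : Fin N × Fin N,
      A p = (1 / (m : ℝ)) * ∑ j, u p.1 (ξ j) * u p.2 (ξ j) := by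
    intro p
    rw [hAdef, PiLp.smul_apply, pilp_sum_apply, smul_eq_mul]
    simp_rw [hMapp]
  have hAinner : ⟪A, cc⟫ = (1 / (m : ℝ)) * ∑ j, (∑ i, c i * u i (ξ j)) ^ 2 := by
    rw [hinner]
    calc ∑ p : Fin N × Fin N, A p * (c p.1 * c p.2)
        = ∑ p : Fin N × Fin N, (1 / (m : ℝ))
            * ∑ j, (u p.1 (ξ j) * u p.2 (ξ j)) * (c p.1 * c p.2) := by
          refine Finset.sum_congr rfl fun p _ => ?_
          rw [hApp p, mul_assoc, Finset.sum_mul]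
      _ = (1 / (m : ℝ)) * ∑ j, ∑ p : Fin N × Fin N,
            (u p.1 (ξ j) * u p.2 (ξ j)) * (c p.1 * c p.2) := by
          rw [← Finset.mul_sum, Finset.sum_comm]
      _ = (1 / (m : ℝ)) * ∑ j, (∑ i, c i * u i (ξ j)) ^ 2 := by
          congr 1
          exact Finset.sum_congr rfl fun j _ => (hsqid (ξ j)).symm
  have hdiff : |⟪A, cc⟫ - S2| ≤ (1 / 2) * S2 := by
    have h1 : ⟪A, cc⟫ - S2 = ⟪A - Imat, cc⟫ := by
      rw [inner_sub_left, hIinner]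
    rw [h1]
    calc |⟪A - Imat, cc⟫| ≤ ‖A - Imat‖ * ‖cc‖ := abs_real_inner_le_norm _ _
      _ ≤ (1 / 2) * S2 := by
        rw [hccnorm]
        exact mul_le_mul_of_nonneg_right hAI hS2nn
  rw [hintf, ← hAinner]
  obtain ⟨hd1, hd2⟩ := abs_le.mp hdiff
  constructor <;> linarith
end
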